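/- arXiv:1906.03371 — 5 statements merged into one kernel-verified Lean document; each statement's English description precedes it below -/
import Mathlib

section
/- Let Θ₁ and Θ₂ be positive definite p×p matrices with ‖Θ₁ − Θ₂‖_op ≤ λ_min(Θ₂)/2, where λ_min(Θ₂) is the smallest eigenvalue of Θ₂. Then the Kullback–Leibler divergence between the centered Gaussians N(0, Θ₁⁻¹) and N(0, Θ₂⁻¹) satisfies KL(N(0,Θ₁⁻¹) ‖ N(0,Θ₂⁻¹)) ≤ ‖Θ₁ − Θ₂‖_F² / λ_min(Θ₂)². -/
open Matrix MeasureTheory Finset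
open scoped RealInnerProductSpace

/-- Operator (spectral) norm of a real square matrix. -/
noncomputable def opNorm {p : ℕ} (M : Matrix (Fin p) (Fin p) ℝ) : ℝ :=
  ‖Matrix.toEuclideanCLM (𝕜 := ℝ) M‖

/-- Squared Frobenius norm. -/
noncomputable def frobSq {p : ℕ} (M : Matrix (Fin p) (Fin p) ℝ) : ℝ :=
  ∑ i, ∑ j, (M i j) ^ 2

/-- KL divergence between the centered Gaussians `N(0, Θ₁⁻¹)` and `N(0, Θ₂⁻¹)`,
expressed through the precision matrices. -/
noncomputable def klGauss {p : ℕ} (Θ₁ Θ₂ : Matrix (Fin p) (Fin p) ℝ) : ℝ :=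
  (1 / 2) * ((Θ₁⁻¹ * (Θ₂ - Θ₁)).trace - Real.log Θ₂.det + Real.log Θ₁.det)

/-- Smallest eigenvalue of a Hermitian (real symmetric) matrix. -/
noncomputable def lambdaMin {p : ℕ} {M : Matrix (Fin p) (Fin p) ℝ}
    (hM : M.IsHermitian) : ℝ :=
  ⨅ i, hM.eigenvalues i

section helpers
variable {p : ℕ}

lemma quad_abs_le (M : Matrix (Fin p) (Fin p) ℝ) (x : Fin p → ℝ) :
    |x ⬝ᵥ (M *ᵥ x)| ≤ opNorm M * (x ⬝ᵥ x) := by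
  set T := Matrix.toEuclideanCLM (𝕜 := ℝ) M with hT
  set y : EuclideanSpace ℝ (Fin p) := (WithLp.equiv 2 _).symm x with hy
  have h0 : T y = (WithLp.equiv 2 _).symm (M *ᵥ x) := by
    rfl
  have h1 : (inner ℝ y (T y) : ℝ) = x ⬝ᵥ (M *ᵥ x) := by
    rw [h0]
    simp only [PiLp.inner_apply, RCLike.inner_apply, dotProduct, hy, WithLp.equiv]
    exact Finset.sum_congr rfl fun i _ => mul_comm _ _
  have h2 : (inner ℝ y y : ℝ) = x ⬝ᵥ x := by
    simp only [PiLp.inner_apply, RCLike.inner_apply, dotProduct, hy, WithLp.equiv]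
    rfl
  have h3 : |(inner ℝ y (T y) : ℝ)| ≤ ‖y‖ * ‖T y‖ := abs_real_inner_le_norm y (T y)
  have h4 : ‖T y‖ ≤ ‖T‖ * ‖y‖ := T.le_opNorm y
  have h5 : ‖y‖ * ‖y‖ = x ⬝ᵥ x := by rw [← h2, real_inner_self_eq_norm_mul_norm]
  calc |x ⬝ᵥ (M *ᵥ x)| = |(inner ℝ y (T y) : ℝ)| := by rw [h1]
    _ ≤ ‖y‖ * ‖T y‖ := h3
    _ ≤ ‖y‖ * (‖T‖ * ‖y‖) := by nlinarith [norm_nonneg y]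
    _ = ‖T‖ * (‖y‖ * ‖y‖) := by ring
    _ = opNorm M * (x ⬝ᵥ x) := by rw [h5, opNorm, hT]

end helpers

section helpers0
open scoped MatrixOrder

lemma psd_eq_transpose_mul_self {p : ℕ} {Q : Matrix (Fin p) (Fin p) ℝ} (hQ : Q.PosSemidef) :
    ∃ C : Matrix (Fin p) (Fin p) ℝ, Q = Cᵀ * C := by
  obtain ⟨C, hC⟩ := CStarAlgebra.nonneg_iff_eq_star_mul_self.mp hQ.nonneg
  exact ⟨C, by rw [hC, Matrix.star_eq_conjTranspose, Matrix.conjTranspose_eq_transpose_of_trivial]⟩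

lemma psd_sqrt_exists {p : ℕ} {M : Matrix (Fin p) (Fin p) ℝ} (hM : M.PosSemidef) :
    ∃ S : Matrix (Fin p) (Fin p) ℝ, S.PosSemidef ∧ S * S = M :=
  ⟨CFC.sqrt M, (CFC.sqrt_nonneg M).posSemidef, CFC.sqrt_mul_sqrt_self M hM.nonneg⟩

end helpers0

section helpers2
variable {p : ℕ}

lemma psd_trace_nonneg {M : Matrix (Fin p) (Fin p) ℝ} (hM : M.PosSemidef) : 0 ≤ M.trace := by
  rw [Matrix.trace]
  apply Finset.sum_nonneg
  intro i _
  have := hM.dotProduct_mulVec_nonneg (Pi.single i 1)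
  simpa [Matrix.diag, Matrix.mulVec_single, dotProduct, Pi.single_apply] using this

lemma trace_mul_psd_nonneg {P Q : Matrix (Fin p) (Fin p) ℝ} (hP : P.PosSemidef)
    (hQ : Q.PosSemidef) : 0 ≤ (P * Q).trace := by
  obtain ⟨C, rfl⟩ := psd_eq_transpose_mul_self hQ
  rw [← Matrix.mul_assoc, Matrix.trace_mul_cycle]
  exact psd_trace_nonneg (hP.mul_mul_conjTranspose_same C)

lemma herm_conj_diag {M : Matrix (Fin p) (Fin p) ℝ} (hM : M.IsHermitian) (c : ℝ) :
    M - c • 1 = (hM.eigenvectorUnitary : Matrix (Fin p) (Fin p) ℝ) *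
      diagonal (fun i => hM.eigenvalues i - c) *
      (star (hM.eigenvectorUnitary : Matrix (Fin p) (Fin p) ℝ)) := by
  have hU : (hM.eigenvectorUnitary : Matrix (Fin p) (Fin p) ℝ) *
      star (hM.eigenvectorUnitary : Matrix (Fin p) (Fin p) ℝ) = 1 :=
    Matrix.mem_unitaryGroup_iff.mp hM.eigenvectorUnitary.2
  have hdiag : (diagonal (fun i => hM.eigenvalues i - c) : Matrix (Fin p) (Fin p) ℝ)
      = diagonal (RCLike.ofReal ∘ hM.eigenvalues) - c • 1 := by
    ext i j
    rcases eq_or_ne i j with rfl | h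
    · simp [Matrix.one_apply]
    · simp [Matrix.diagonal_apply_ne _ h, Matrix.one_apply_ne h]
  rw [hdiag, Matrix.mul_sub, Matrix.sub_mul, ← Unitary.conjStarAlgAut_apply (S := ℝ), ← hM.spectral_theorem]
  congr 1
  rw [Matrix.mul_smul, Matrix.mul_one, Matrix.smul_mul, hU]

lemma sub_smul_one_posSemidef {M : Matrix (Fin p) (Fin p) ℝ} (hM : M.IsHermitian) {c : ℝ}
    (hc : ∀ i, c ≤ hM.eigenvalues i) : (M - c • 1).PosSemidef := by
  rw [herm_conj_diag hM c, Matrix.star_eq_conjTranspose]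
  exact (Matrix.posSemidef_diagonal_iff.mpr
    fun i => sub_nonneg.mpr (hc i)).mul_mul_conjTranspose_same _

end helpers2

section helpers3
variable {p : ℕ}

lemma unitary_conj_trace (U : Matrix.unitaryGroup (Fin p) ℝ) (M : Matrix (Fin p) (Fin p) ℝ) :
    ((U : Matrix (Fin p) (Fin p) ℝ) * M * star (U : Matrix (Fin p) (Fin p) ℝ)).trace = M.trace := by
  rw [Matrix.trace_mul_comm, ← Matrix.mul_assoc, Matrix.mem_unitaryGroup_iff'.mp U.2,
    Matrix.one_mul]

lemma spectral_real {M : Matrix (Fin p) (Fin p) ℝ} (hM : M.IsHermitian) :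
    M = (hM.eigenvectorUnitary : Matrix (Fin p) (Fin p) ℝ) * diagonal hM.eigenvalues *
      star (hM.eigenvectorUnitary : Matrix (Fin p) (Fin p) ℝ) := by
  have h := hM.spectral_theorem
  simpa [Function.comp] using h

lemma herm_inv_trace {M : Matrix (Fin p) (Fin p) ℝ} (hM : M.IsHermitian)
    (hnz : ∀ i, hM.eigenvalues i ≠ 0) :
    M⁻¹.trace = ∑ i, (hM.eigenvalues i)⁻¹ := by
  have hdinv : (diagonal hM.eigenvalues)⁻¹ =
      diagonal (fun i => (hM.eigenvalues i)⁻¹) := by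
    apply Matrix.inv_eq_left_inv
    rw [Matrix.diagonal_mul_diagonal]
    ext i j
    rcases eq_or_ne i j with rfl | h
    · simp [inv_mul_cancel₀ (hnz i), Matrix.one_apply]
    · simp [Matrix.diagonal_apply_ne _ h, Matrix.one_apply_ne h]
  have hU1 : (hM.eigenvectorUnitary : Matrix (Fin p) (Fin p) ℝ) *
      star (hM.eigenvectorUnitary : Matrix (Fin p) (Fin p) ℝ) = 1 :=
    Matrix.mem_unitaryGroup_iff.mp hM.eigenvectorUnitary.2
  have hU2 : star (hM.eigenvectorUnitary : Matrix (Fin p) (Fin p) ℝ) *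
      (hM.eigenvectorUnitary : Matrix (Fin p) (Fin p) ℝ) = 1 :=
    Matrix.mem_unitaryGroup_iff'.mp hM.eigenvectorUnitary.2
  have hUinv : (hM.eigenvectorUnitary : Matrix (Fin p) (Fin p) ℝ)⁻¹ =
      star (hM.eigenvectorUnitary : Matrix (Fin p) (Fin p) ℝ) := Matrix.inv_eq_left_inv hU2
  have hsUinv : (star (hM.eigenvectorUnitary : Matrix (Fin p) (Fin p) ℝ))⁻¹ =
      (hM.eigenvectorUnitary : Matrix (Fin p) (Fin p) ℝ) := Matrix.inv_eq_left_inv hU1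
  conv_lhs => rw [spectral_real hM, Matrix.mul_inv_rev, Matrix.mul_inv_rev, hUinv, hsUinv]
  rw [← Matrix.mul_assoc, Matrix.trace_mul_comm, ← Matrix.mul_assoc, hU2,
    Matrix.one_mul, hdinv, Matrix.trace_diagonal]

lemma herm_sq_trace {M : Matrix (Fin p) (Fin p) ℝ} (hM : M.IsHermitian) :
    (M * M).trace = ∑ i, (hM.eigenvalues i)^2 := by
  have hU2 : star (hM.eigenvectorUnitary : Matrix (Fin p) (Fin p) ℝ) *
      (hM.eigenvectorUnitary : Matrix (Fin p) (Fin p) ℝ) = 1 :=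
    Matrix.mem_unitaryGroup_iff'.mp hM.eigenvectorUnitary.2
  have key : ∀ X Y : Matrix (Fin p) (Fin p) ℝ,
      (hM.eigenvectorUnitary : Matrix (Fin p) (Fin p) ℝ) * X *
        star (hM.eigenvectorUnitary : Matrix (Fin p) (Fin p) ℝ) *
        ((hM.eigenvectorUnitary : Matrix (Fin p) (Fin p) ℝ) * Y *
          star (hM.eigenvectorUnitary : Matrix (Fin p) (Fin p) ℝ)) =
      (hM.eigenvectorUnitary : Matrix (Fin p) (Fin p) ℝ) * (X * Y) *
        star (hM.eigenvectorUnitary : Matrix (Fin p) (Fin p) ℝ) := by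
    intro X Y
    simp only [Matrix.mul_assoc]
    rw [← Matrix.mul_assoc (star (hM.eigenvectorUnitary : Matrix (Fin p) (Fin p) ℝ))
      (hM.eigenvectorUnitary : Matrix (Fin p) (Fin p) ℝ), hU2, Matrix.one_mul]
  conv_lhs => rw [spectral_real hM]
  rw [key, unitary_conj_trace, Matrix.diagonal_mul_diagonal, Matrix.trace_diagonal]
  simp [pow_two]

end helpers3

section helpers4
variable {p : ℕ}

lemma herm_det_real {M : Matrix (Fin p) (Fin p) ℝ} (hM : M.IsHermitian) :
    M.det = ∏ i, hM.eigenvalues i := by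
  simpa using hM.det_eq_prod_eigenvalues

lemma eigen_dot_self {M : Matrix (Fin p) (Fin p) ℝ} (hM : M.IsHermitian) (i : Fin p) :
    (⇑(hM.eigenvectorBasis i) : Fin p → ℝ) ⬝ᵥ ⇑(hM.eigenvectorBasis i) = 1 := by
  have h := hM.eigenvectorBasis.orthonormal.1 i
  have h2 : (inner ℝ (hM.eigenvectorBasis i) (hM.eigenvectorBasis i) : ℝ) = 1 := by
    rw [real_inner_self_eq_norm_mul_norm, h]; norm_num
  rw [← h2]
  simp only [PiLp.inner_apply, RCLike.inner_apply, dotProduct]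
  rfl

lemma eigen_rayleigh {M : Matrix (Fin p) (Fin p) ℝ} (hM : M.IsHermitian) (i : Fin p) :
    hM.eigenvalues i = (⇑(hM.eigenvectorBasis i) : Fin p → ℝ) ⬝ᵥ (M *ᵥ ⇑(hM.eigenvectorBasis i)) := by
  simpa using hM.eigenvalues_eq i

end helpers4

section helpers5
variable {p : ℕ}

lemma unitary_conj_mul (U : Matrix.unitaryGroup (Fin p) ℝ) (X Y : Matrix (Fin p) (Fin p) ℝ) :
    ((U : Matrix (Fin p) (Fin p) ℝ) * X * star (U : Matrix (Fin p) (Fin p) ℝ)) *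
      ((U : Matrix (Fin p) (Fin p) ℝ) * Y * star (U : Matrix (Fin p) (Fin p) ℝ)) =
    (U : Matrix (Fin p) (Fin p) ℝ) * (X * Y) * star (U : Matrix (Fin p) (Fin p) ℝ) := by
  have hU2 : star (U : Matrix (Fin p) (Fin p) ℝ) * (U : Matrix (Fin p) (Fin p) ℝ) = 1 :=
    Matrix.mem_unitaryGroup_iff'.mp U.2
  simp only [Matrix.mul_assoc]
  rw [← Matrix.mul_assoc (star (U : Matrix (Fin p) (Fin p) ℝ)) (U : Matrix (Fin p) (Fin p) ℝ),
    hU2, Matrix.one_mul]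

lemma herm_shift_sq_trace {M : Matrix (Fin p) (Fin p) ℝ} (hM : M.IsHermitian) :
    ((M - 1) * (M - 1)).trace = ∑ i, (hM.eigenvalues i - 1)^2 := by
  have h := herm_conj_diag hM 1
  rw [one_smul] at h
  rw [h, unitary_conj_mul, unitary_conj_trace, Matrix.diagonal_mul_diagonal,
    Matrix.trace_diagonal]
  simp [pow_two]

lemma psd_smul {p : ℕ} {M : Matrix (Fin p) (Fin p) ℝ} (hM : M.PosSemidef) {c : ℝ}
    (hc : 0 ≤ c) : (c • M).PosSemidef := by
  refine Matrix.PosSemidef.of_dotProduct_mulVec_nonneg ?_ ?_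
  · show (c • M)ᴴ = c • M
    rw [Matrix.conjTranspose_smul, star_trivial, hM.1.eq]
  · intro x
    have h := hM.dotProduct_mulVec_nonneg x
    rw [Matrix.smul_mulVec, dotProduct_smul]
    exact smul_nonneg hc h

end helpers5

theorem stmt_2 {p : ℕ} (Θ₁ Θ₂ : Matrix (Fin p) (Fin p) ℝ)
    (h1 : Θ₁.PosDef) (h2 : Θ₂.PosDef)
    (hop : opNorm (Θ₁ - Θ₂) ≤ lambdaMin h2.1 / 2) :
    klGauss Θ₁ Θ₂ ≤ frobSq (Θ₁ - Θ₂) / (lambdaMin h2.1) ^ 2 := by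
  rcases Nat.eq_zero_or_pos p with hp | hp
  · subst hp
    simp [klGauss, frobSq, Matrix.trace, Matrix.det_fin_zero]
  haveI hpne : Nonempty (Fin p) := ⟨⟨0, hp⟩⟩
  set lam := lambdaMin h2.1 with hlamdef
  have hlam_le : ∀ i, lam ≤ h2.1.eigenvalues i := fun i =>
    ciInf_le (Set.finite_range _).bddBelow i
  have hlam_pos : 0 < lam := by
    obtain ⟨i₀, hi₀⟩ := Finite.exists_min h2.1.eigenvalues
    exact lt_of_lt_of_le (h2.eigenvalues_pos i₀) (le_ciInf hi₀)
  set D := Θ₁ - Θ₂ with hDdef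
  have hDh : D.IsHermitian := h1.1.sub h2.1
  have hdotself : ∀ x : Fin p → ℝ, 0 ≤ x ⬝ᵥ x := fun x =>
    Finset.sum_nonneg fun i _ => mul_self_nonneg _
  -- Θ₂ ⪰ lam
  have hTh2 : (Θ₂ - lam • 1).PosSemidef := sub_smul_one_posSemidef h2.1 hlam_le
  have hquadT2 : ∀ x : Fin p → ℝ, lam * (x ⬝ᵥ x) ≤ x ⬝ᵥ (Θ₂ *ᵥ x) := by
    intro x
    have h := hTh2.dotProduct_mulVec_nonneg x
    have heq : (star x) ⬝ᵥ ((Θ₂ - lam • 1) *ᵥ x) = x ⬝ᵥ (Θ₂ *ᵥ x) - lam * (x ⬝ᵥ x) := by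
      rw [Matrix.sub_mulVec, dotProduct_sub, Matrix.smul_mulVec, Matrix.one_mulVec,
        dotProduct_smul]
      simp [smul_eq_mul]
    rw [heq] at h
    linarith
  -- Θ₁ - Θ₂/2 psd
  have hsplit : Θ₁ - (2⁻¹:ℝ) • Θ₂ = D + (2⁻¹:ℝ) • Θ₂ := by
    rw [hDdef]; module
  have hD12 : (Θ₁ - (2⁻¹:ℝ) • Θ₂).PosSemidef := by
    refine Matrix.PosSemidef.of_dotProduct_mulVec_nonneg ?_ ?_
    · show (Θ₁ - (2⁻¹:ℝ) • Θ₂)ᴴ = _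
      rw [Matrix.conjTranspose_sub, Matrix.conjTranspose_smul, h1.1.eq, h2.1.eq, star_trivial]
    · intro x
      have hq := quad_abs_le D x
      have h2q := hquadT2 x
      have hxx := hdotself x
      have hDlow : -(lam / 2) * (x ⬝ᵥ x) ≤ x ⬝ᵥ (D *ᵥ x) := by
        have h3 := neg_abs_le (x ⬝ᵥ (D *ᵥ x))
        have h4 : opNorm D * (x ⬝ᵥ x) ≤ (lam / 2) * (x ⬝ᵥ x) :=
          mul_le_mul_of_nonneg_right hop hxx
        nlinarith
      have heq : (star x) ⬝ᵥ ((Θ₁ - (2⁻¹:ℝ) • Θ₂) *ᵥ x)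
          = x ⬝ᵥ (D *ᵥ x) + 2⁻¹ * (x ⬝ᵥ (Θ₂ *ᵥ x)) := by
        rw [hsplit, Matrix.add_mulVec, dotProduct_add, Matrix.smul_mulVec,
          dotProduct_smul]
        simp [smul_eq_mul]
      rw [heq]
      linarith
  -- square root of Θ₂⁻¹
  have h2i : (Θ₂⁻¹).PosDef := h2.inv
  obtain ⟨S, hSpsd, hSS⟩ := psd_sqrt_exists h2i.posSemidef
  have hSh : S.IsHermitian := hSpsd.1
  have hdet2 : Θ₂.det ≠ 0 := ne_of_gt h2.det_pos
  have hdet1 : Θ₁.det ≠ 0 := ne_of_gt h1.det_pos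
  have hdet2i : Θ₂⁻¹.det ≠ 0 := ne_of_gt h2i.det_pos
  have hSdetunit : IsUnit S.det := by
    have hss : S.det * S.det = Θ₂⁻¹.det := by rw [← Matrix.det_mul, hSS]
    exact isUnit_iff_ne_zero.mpr fun h => hdet2i (by rw [← hss, h, zero_mul])
  have hSinv2 : S⁻¹ * S⁻¹ = Θ₂ := by
    rw [← Matrix.mul_inv_rev, hSS, Matrix.nonsing_inv_nonsing_inv _ (isUnit_iff_ne_zero.mpr hdet2)]
  have hSmul : S * S⁻¹ = 1 := Matrix.mul_nonsing_inv _ hSdetunit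
  have hSmul' : S⁻¹ * S = 1 := Matrix.nonsing_inv_mul _ hSdetunit
  have hST2S : S * Θ₂ * S = 1 := by
    rw [← hSinv2]
    calc S * (S⁻¹ * S⁻¹) * S = (S * S⁻¹) * (S⁻¹ * S) := by simp only [Matrix.mul_assoc]
      _ = 1 := by rw [hSmul, hSmul', Matrix.one_mul]
  set B := S * Θ₁ * S with hBdef
  have hBh : B.IsHermitian := by
    show Bᴴ = B
    rw [hBdef]
    simp only [Matrix.conjTranspose_mul, hSh.eq, h1.1.eq, Matrix.mul_assoc]
  have hBpd : B.PosDef := by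
    refine Matrix.PosDef.of_dotProduct_mulVec_pos hBh fun x hx => ?_
    have hx' : S *ᵥ x ≠ 0 := by
      intro hc
      apply hx
      have h5 := congrArg (fun v => S⁻¹ *ᵥ v) hc
      simpa [Matrix.mulVec_mulVec, hSmul'] using h5
    have hpos := h1.dotProduct_mulVec_pos hx'
    have heq : (star x) ⬝ᵥ (B *ᵥ x) = (star (S *ᵥ x)) ⬝ᵥ (Θ₁ *ᵥ (S *ᵥ x)) := by
      rw [hBdef, ← Matrix.mulVec_mulVec, ← Matrix.mulVec_mulVec,
        Matrix.star_mulVec, hSh.eq, Matrix.dotProduct_mulVec]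
    rw [heq]
    exact hpos
  -- identities for B
  have hB1 : S * D * S = B - 1 := by
    rw [hDdef, Matrix.mul_sub, Matrix.sub_mul, hST2S]
  have hss2 : S.det * S.det = (Θ₂.det)⁻¹ := by
    rw [← Matrix.det_mul, hSS, Matrix.det_nonsing_inv, Ring.inverse_eq_inv']
  have hdetB : B.det = Θ₁.det / Θ₂.det := by
    rw [hBdef, Matrix.det_mul, Matrix.det_mul]
    calc S.det * Θ₁.det * S.det = Θ₁.det * (S.det * S.det) := by ring
      _ = Θ₁.det / Θ₂.det := by rw [hss2, div_eq_mul_inv]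
  have hBinvtr : B⁻¹.trace = (Θ₁⁻¹ * Θ₂).trace := by
    have hBinv : B⁻¹ = S⁻¹ * (Θ₁⁻¹ * S⁻¹) := by
      rw [hBdef, Matrix.mul_inv_rev, Matrix.mul_inv_rev]
    rw [hBinv, Matrix.trace_mul_comm, Matrix.mul_assoc, hSinv2]
  have hbpos : ∀ i, 0 < hBh.eigenvalues i := fun i => hBpd.eigenvalues_pos i
  -- eigenvalue lower bound 1/2
  have hB12psd : (B - (2⁻¹:ℝ) • 1).PosSemidef := by
    have heq : S * (Θ₁ - (2⁻¹:ℝ) • Θ₂) * S = B - (2⁻¹:ℝ) • 1 := by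
      rw [Matrix.mul_sub, Matrix.sub_mul, Matrix.mul_smul, Matrix.smul_mul, hST2S]
    rw [← heq]
    have h6 := hD12.conjTranspose_mul_mul_same S
    rwa [hSh.eq] at h6
  have hbhalf : ∀ i, (2⁻¹:ℝ) ≤ hBh.eigenvalues i := by
    intro i
    have h := hB12psd.dotProduct_mulVec_nonneg (⇑(hBh.eigenvectorBasis i))
    have hray := eigen_rayleigh hBh i
    have hds := eigen_dot_self hBh i
    have heq : star (⇑(hBh.eigenvectorBasis i) : Fin p → ℝ) ⬝ᵥ
        ((B - (2⁻¹:ℝ) • 1) *ᵥ ⇑(hBh.eigenvectorBasis i)) = hBh.eigenvalues i - 2⁻¹ := by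
      rw [Matrix.sub_mulVec, dotProduct_sub, Matrix.smul_mulVec, Matrix.one_mulVec,
        dotProduct_smul]
      simp only [star_trivial, smul_eq_mul, ← hray, hds, mul_one]
    rw [heq] at h
    linarith
  -- Frobenius chain
  have hmu : ((lam⁻¹:ℝ) • 1 - Θ₂⁻¹).PosSemidef := by
    have h9 : (lam⁻¹:ℝ) • (Θ₂ - lam • 1) = lam⁻¹ • Θ₂ - 1 := by
      rw [smul_sub, smul_smul, inv_mul_cancel₀ hlam_pos.ne', one_smul]
    have hpsd9 : ((lam⁻¹:ℝ) • Θ₂ - 1).PosSemidef := by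
      rw [← h9]; exact psd_smul hTh2 (inv_nonneg.mpr hlam_pos.le)
    have h10 : S * ((lam⁻¹:ℝ) • Θ₂ - 1) * S = (lam⁻¹:ℝ) • 1 - Θ₂⁻¹ := by
      rw [Matrix.mul_sub, Matrix.sub_mul, Matrix.mul_smul, Matrix.smul_mul, hST2S,
        Matrix.mul_one, hSS]
    rw [← h10]
    have h11 := hpsd9.conjTranspose_mul_mul_same S
    rwa [hSh.eq] at h11
  have key1 : ∀ P : Matrix (Fin p) (Fin p) ℝ, P.PosSemidef →
      (P * Θ₂⁻¹).trace ≤ lam⁻¹ * P.trace := by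
    intro P hP
    have h0 := trace_mul_psd_nonneg hP hmu
    rw [Matrix.mul_sub, Matrix.trace_sub, Matrix.mul_smul, Matrix.mul_one,
      Matrix.trace_smul] at h0
    simp only [smul_eq_mul] at h0
    linarith
  have hP1 : (D * Θ₂⁻¹ * D).PosSemidef := by
    have h12 := h2i.posSemidef.mul_mul_conjTranspose_same D
    rwa [hDh.eq] at h12
  have hP2 : (D * D).PosSemidef := by
    have h13 := Matrix.posSemidef_conjTranspose_mul_self D
    rwa [hDh.eq] at h13
  have htrDD : (D * D).trace = frobSq (Θ₁ - Θ₂) := by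
    rw [Matrix.trace]
    show ∑ i, (D * D) i i = frobSq D
    rw [show frobSq D = ∑ i, ∑ j, (D i j)^2 from rfl]
    refine Finset.sum_congr rfl fun i _ => ?_
    rw [Matrix.mul_apply]
    refine Finset.sum_congr rfl fun j _ => ?_
    have hsym : D j i = D i j := by
      have := congrFun (congrFun hDh.eq j) i
      simpa [Matrix.conjTranspose_apply] using this.symm
    rw [hsym, pow_two]
  have hchain : ((B - 1) * (B - 1)).trace ≤ frobSq (Θ₁ - Θ₂) / lam ^ 2 := by
    have hBB : (B - 1) * (B - 1) = S * (D * Θ₂⁻¹ * D) * S := by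
      rw [← hB1]
      have hmid : S * (S * (D * S)) = Θ₂⁻¹ * (D * S) := by
        rw [← Matrix.mul_assoc S S, hSS]
      simp only [Matrix.mul_assoc]
      rw [hmid]
    have ht1 : ((B - 1) * (B - 1)).trace = ((D * Θ₂⁻¹ * D) * Θ₂⁻¹).trace := by
      rw [hBB, Matrix.trace_mul_comm, ← Matrix.mul_assoc, hSS, Matrix.trace_mul_comm]
    have h1' := key1 _ hP1
    have h2' := key1 _ hP2
    have ht2 : (D * Θ₂⁻¹ * D).trace = (D * D * Θ₂⁻¹).trace := by
      rw [Matrix.trace_mul_comm, ← Matrix.mul_assoc]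
    calc ((B - 1) * (B - 1)).trace = ((D * Θ₂⁻¹ * D) * Θ₂⁻¹).trace := ht1
      _ ≤ lam⁻¹ * (D * Θ₂⁻¹ * D).trace := h1'
      _ = lam⁻¹ * (D * D * Θ₂⁻¹).trace := by rw [ht2]
      _ ≤ lam⁻¹ * (lam⁻¹ * (D * D).trace) :=
          mul_le_mul_of_nonneg_left h2' (inv_nonneg.mpr hlam_pos.le)
      _ = frobSq (Θ₁ - Θ₂) / lam ^ 2 := by
          rw [htrDD, pow_two, div_eq_mul_inv, mul_inv]; ring
  have hsum_sq : ∑ i, (hBh.eigenvalues i - 1)^2 ≤ frobSq (Θ₁ - Θ₂) / lam ^ 2 := by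
    rw [← herm_shift_sq_trace hBh]
    exact hchain
  -- KL in terms of eigenvalues of B
  have htrinv : B⁻¹.trace = ∑ i, (hBh.eigenvalues i)⁻¹ :=
    herm_inv_trace hBh fun i => (hbpos i).ne'
  have htr : (Θ₁⁻¹ * (Θ₂ - Θ₁)).trace = (∑ i, (hBh.eigenvalues i)⁻¹) - p := by
    rw [Matrix.mul_sub, Matrix.trace_sub, Matrix.nonsing_inv_mul _ (isUnit_iff_ne_zero.mpr hdet1),
      Matrix.trace_one, ← hBinvtr, htrinv]
    simp
  have hlog : Real.log Θ₁.det - Real.log Θ₂.det = ∑ i, Real.log (hBh.eigenvalues i) := by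
    rw [← Real.log_div hdet1 hdet2, ← hdetB, herm_det_real hBh,
      Real.log_prod fun i _ => (hbpos i).ne']
  have hKL : klGauss Θ₁ Θ₂ =
      (1/2) * ∑ i, ((hBh.eigenvalues i)⁻¹ - 1 + Real.log (hBh.eigenvalues i)) := by
    have hsum : ∑ i, ((hBh.eigenvalues i)⁻¹ - 1 + Real.log (hBh.eigenvalues i)) =
        ((∑ i, (hBh.eigenvalues i)⁻¹) - p) + ∑ i, Real.log (hBh.eigenvalues i) := by
      rw [Finset.sum_add_distrib, Finset.sum_sub_distrib]
      simp [Finset.card_univ]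
    show (1 / 2) * ((Θ₁⁻¹ * (Θ₂ - Θ₁)).trace - Real.log Θ₂.det + Real.log Θ₁.det) = _
    rw [htr, hsum]
    ring_nf
    linarith [hlog]
  have hscal : ∀ i, (hBh.eigenvalues i)⁻¹ - 1 + Real.log (hBh.eigenvalues i) ≤
      2 * (hBh.eigenvalues i - 1)^2 := by
    intro i
    have h1t : (2:ℝ)⁻¹ ≤ hBh.eigenvalues i := hbhalf i
    have h0t : 0 < hBh.eigenvalues i := hbpos i
    have hlogt := Real.log_le_sub_one_of_pos h0t
    have hinv : hBh.eigenvalues i * (hBh.eigenvalues i)⁻¹ = 1 := mul_inv_cancel₀ h0t.ne'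
    nlinarith [sq_nonneg (hBh.eigenvalues i - 1),
      mul_nonneg (show (0:ℝ) ≤ 2 * hBh.eigenvalues i - 1 by linarith)
        (sq_nonneg (hBh.eigenvalues i - 1))]
  calc klGauss Θ₁ Θ₂
      = (1/2) * ∑ i, ((hBh.eigenvalues i)⁻¹ - 1 + Real.log (hBh.eigenvalues i)) := hKL
    _ ≤ (1/2) * ∑ i, 2 * (hBh.eigenvalues i - 1)^2 := by
        apply mul_le_mul_of_nonneg_left _ (by norm_num)
        exact Finset.sum_le_sum fun i _ => hscal i
    _ = ∑ i, (hBh.eigenvalues i - 1)^2 := by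
        rw [← Finset.mul_sum]; ring
    _ ≤ frobSq (Θ₁ - Θ₂) / lam ^ 2 := hsum_sq
end

section
/- For positive definite matrices Θ₁, Θ₂ of the same size, the KL divergence between N(0,Θ₁⁻¹) and N(0,Θ₂⁻¹) equals (1/4)·Tr(Θ̃⁻¹(Θ₂−Θ₁)Θ̃⁻¹(Θ₂−Θ₁)) for some Θ̃ = tΘ₁ + (1−t)Θ₂ with t ∈ [0,1]. -/
open Matrix MeasureTheory Finset

attribute [local instance] Matrix.linftyOpNormedRing Matrix.linftyOpNormedAlgebra
  Matrix.linftyOpNormedAddCommGroup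

variable {p : ℕ}

/-- Derivative of `ε ↦ det (1 + ε • B)` at `0` is `trace B`. -/
lemma aux_hasDerivAt_det_one_add_smul (B : Matrix (Fin p) (Fin p) ℝ) :
    HasDerivAt (fun ε : ℝ => (1 + ε • B).det) B.trace 0 := by
  have key : HasDerivAt (fun ε : ℝ => (1 + ε • B).det)
      (∑ σ : Equiv.Perm (Fin p), (Equiv.Perm.sign σ : ℤ) •
        (∑ i, (∏ j ∈ univ.erase i, ((1 : Matrix (Fin p) (Fin p) ℝ) + (0:ℝ) • B) (σ j) j) •
          B (σ i) i)) 0 := by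
    have : (fun ε : ℝ => (1 + ε • B).det) = fun ε : ℝ =>
        ∑ σ : Equiv.Perm (Fin p), (Equiv.Perm.sign σ : ℤ) • ∏ i, ((1 : Matrix (Fin p) (Fin p) ℝ) + ε • B) (σ i) i := by
      funext ε; rw [Matrix.det_apply]; simp only [Units.smul_def]
    rw [this]
    refine HasDerivAt.fun_sum fun σ _ => HasDerivAt.fun_const_smul _ ?_
    refine HasDerivAt.fun_finsetProd fun i _ => ?_
    have : (fun ε : ℝ => ((1 : Matrix (Fin p) (Fin p) ℝ) + ε • B) (σ i) i)
        = fun ε : ℝ => (1 : Matrix (Fin p) (Fin p) ℝ) (σ i) i + ε * B (σ i) i := by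
      funext ε; simp [Matrix.add_apply, Matrix.smul_apply, smul_eq_mul]
    rw [this]
    simpa using ((hasDerivAt_id (0:ℝ)).mul_const (B (σ i) i)).const_add ((1 : Matrix (Fin p) (Fin p) ℝ) (σ i) i)
  convert key using 1
  rw [eq_comm, Finset.sum_eq_single (1 : Equiv.Perm (Fin p))]
  · simp [Matrix.one_apply, Matrix.trace]
  · intro σ _ hσ
    have hmove : ∃ a b : Fin p, a ≠ b ∧ σ a ≠ a ∧ σ b ≠ b := by
      obtain ⟨a, ha⟩ : ∃ a, σ a ≠ a := by
        by_contra h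
        push_neg at h
        exact hσ (Equiv.ext fun x => h x)
      exact ⟨a, σ a, fun h => ha h.symm, ha, fun h => ha (σ.injective h)⟩
    obtain ⟨a, b, hab, ha, hb⟩ := hmove
    have : ∀ i, (∏ j ∈ univ.erase i, (1 : Matrix (Fin p) (Fin p) ℝ) (σ j) j) = 0 := by
      intro i
      rcases ne_or_eq i a with h | rfl
      · exact Finset.prod_eq_zero (Finset.mem_erase.2 ⟨Ne.symm h, Finset.mem_univ a⟩)
          (by simp [Matrix.one_apply, ha])
      · exact Finset.prod_eq_zero (Finset.mem_erase.2 ⟨Ne.symm hab, Finset.mem_univ b⟩)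
          (by simp [Matrix.one_apply, hb])
    simp [this]
  · simp

/-- Path `s ↦ A + s • H` has derivative `H`. -/
lemma aux_hasDerivAt_line (A H : Matrix (Fin p) (Fin p) ℝ) (s₀ : ℝ) :
    HasDerivAt (fun s : ℝ => A + s • H) H s₀ := by
  have h := ((hasDerivAt_id s₀).smul_const H).const_add A
  simp only [id, one_smul] at h
  exact h

/-- Jacobi's formula along a line, at an invertible point. -/
lemma aux_hasDerivAt_det (A H : Matrix (Fin p) (Fin p) ℝ) (s₀ : ℝ)
    (h : IsUnit (A + s₀ • H).det) :
    HasDerivAt (fun s : ℝ => (A + s • H).det)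
      ((A + s₀ • H).det * ((A + s₀ • H)⁻¹ * H).trace) s₀ := by
  set M := A + s₀ • H with hM
  set B := M⁻¹ * H with hB
  have factor : ∀ s : ℝ, A + s • H = M * (1 + (s - s₀) • B) := by
    intro s
    rw [hB, mul_add, mul_one, Matrix.mul_smul, Matrix.mul_nonsing_inv_cancel_left _ _ h, hM]
    module
  have : (fun s : ℝ => (A + s • H).det) = fun s => M.det * (1 + (s - s₀) • B).det := by
    funext s; rw [factor s, Matrix.det_mul]
  rw [this]
  have inner : HasDerivAt (fun s : ℝ => s - s₀) 1 s₀ := by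
    simpa using (hasDerivAt_id s₀).sub_const s₀
  have comp : HasDerivAt (fun s : ℝ => (1 + (s - s₀) • B).det) B.trace s₀ := by
    have h := HasDerivAt.scomp_of_eq (x := s₀) (hg := aux_hasDerivAt_det_one_add_smul B) (hh := inner) (hy := (sub_self s₀).symm)
    simp only [one_smul] at h
    exact h
  simpa using comp.const_mul M.det

/-- Derivative of the inverse along a line. -/
lemma aux_hasDerivAt_inv (A H : Matrix (Fin p) (Fin p) ℝ) (s₀ : ℝ)
    (h : IsUnit (A + s₀ • H).det) :
    HasDerivAt (fun s : ℝ => (A + s • H)⁻¹)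
      (-((A + s₀ • H)⁻¹ * H * (A + s₀ • H)⁻¹)) s₀ := by
  haveI : CompleteSpace (Matrix (Fin p) (Fin p) ℝ) := FiniteDimensional.complete ℝ _
  obtain ⟨u, hu⟩ := (Matrix.isUnit_iff_isUnit_det _).mpr h
  have hf := hasFDerivAt_ringInverse (𝕜 := ℝ) u
  rw [hu] at hf
  have hγ := aux_hasDerivAt_line A H s₀
  have comp := hf.comp_hasDerivAt s₀ hγ
  have hinv : (↑u⁻¹ : Matrix (Fin p) (Fin p) ℝ) = (A + s₀ • H)⁻¹ := by
    rw [Matrix.coe_units_inv, hu]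
  have : (fun s : ℝ => Ring.inverse (A + s • H)) = fun s : ℝ => (A + s • H)⁻¹ := by
    funext s; rw [Matrix.nonsing_inv_eq_ringInverse]
  have goalval : (-(ContinuousLinearMap.mulLeftRight ℝ (Matrix (Fin p) (Fin p) ℝ) ↑u⁻¹) ↑u⁻¹) H
      = -((A + s₀ • H)⁻¹ * H * (A + s₀ • H)⁻¹) := by
    simp [hinv, Matrix.mul_assoc]
  rw [← this, ← goalval]
  exact comp

lemma aux_posDef_segment (Θ₁ Θ₂ : Matrix (Fin p) (Fin p) ℝ)
    (h1 : Θ₁.PosDef) (h2 : Θ₂.PosDef) {s : ℝ} (hs : s ∈ Set.Icc (0:ℝ) 1) :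
    (Θ₁ + s • (Θ₂ - Θ₁)).PosDef := by
  have herm : (Θ₁ + s • (Θ₂ - Θ₁)).IsHermitian := by
    have e1 : Θ₁ᴴ = Θ₁ := h1.1
    have e2 : Θ₂ᴴ = Θ₂ := h2.1
    show (Θ₁ + s • (Θ₂ - Θ₁))ᴴ = _
    rw [Matrix.conjTranspose_add, Matrix.conjTranspose_smul, Matrix.conjTranspose_sub, e1, e2]
    norm_num
  refine Matrix.PosDef.of_dotProduct_mulVec_pos herm fun x hx => ?_
  have q1 := h1.dotProduct_mulVec_pos hx
  have q2 := h2.dotProduct_mulVec_pos hx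
  have expand : dotProduct (star x) ((Θ₁ + s • (Θ₂ - Θ₁)) *ᵥ x)
      = (1 - s) * dotProduct (star x) (Θ₁ *ᵥ x) + s * dotProduct (star x) (Θ₂ *ᵥ x) := by
    simp [Matrix.add_mulVec, Matrix.sub_mulVec, Matrix.smul_mulVec,
      dotProduct_add, dotProduct_sub, dotProduct_smul, smul_eq_mul]
    ring
  rw [expand]
  rcases eq_or_lt_of_le hs.2 with h | h
  · rw [h]; simpa using q2
  · have : 0 < (1 - s) * dotProduct (star x) (Θ₁ *ᵥ x) :=
      mul_pos (by linarith) q1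
    have h2' : 0 ≤ s * dotProduct (star x) (Θ₂ *ᵥ x) :=
      mul_nonneg hs.1 q2.le
    linarith

theorem stmt_3 {p : ℕ} (Θ₁ Θ₂ : Matrix (Fin p) (Fin p) ℝ)
    (h1 : Θ₁.PosDef) (h2 : Θ₂.PosDef) :
    ∃ t ∈ Set.Icc (0 : ℝ) 1,
      klGauss Θ₁ Θ₂ =
        (1 / 4) * ((t • Θ₁ + (1 - t) • Θ₂)⁻¹ * (Θ₂ - Θ₁) *
          (t • Θ₁ + (1 - t) • Θ₂)⁻¹ * (Θ₂ - Θ₁)).trace := by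
  classical
  set H : Matrix (Fin p) (Fin p) ℝ := Θ₂ - Θ₁ with hH
  -- positivity along the segment
  have hpos : ∀ s ∈ Set.Icc (0:ℝ) 1, (Θ₁ + s • H).PosDef := fun s hs =>
    aux_posDef_segment Θ₁ Θ₂ h1 h2 hs
  have hdetpos : ∀ s ∈ Set.Icc (0:ℝ) 1, 0 < (Θ₁ + s • H).det := fun s hs =>
    (hpos s hs).det_pos
  have hunit : ∀ s ∈ Set.Icc (0:ℝ) 1, IsUnit (Θ₁ + s • H).det := fun s hs =>
    isUnit_iff_ne_zero.mpr (hdetpos s hs).ne'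
  -- the three functions
  set g : ℝ → ℝ := fun s => -Real.log ((Θ₁ + s • H).det) with hg
  set f₁ : ℝ → ℝ := fun s => -(((Θ₁ + s • H)⁻¹ * H).trace) with hf₁
  set f₂ : ℝ → ℝ := fun s => ((Θ₁ + s • H)⁻¹ * H * (Θ₁ + s • H)⁻¹ * H).trace with hf₂
  -- first derivative
  have dg : ∀ s ∈ Set.Icc (0:ℝ) 1, HasDerivAt g (f₁ s) s := by
    intro s hs
    have hd := aux_hasDerivAt_det Θ₁ H s (hunit s hs)
    have hne : (Θ₁ + s • H).det ≠ 0 := (hdetpos s hs).ne'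
    have := (hd.log hne).neg
    refine this.congr_deriv ?_
    field_simp [hf₁]
    rfl
  -- second derivative
  have df₁ : ∀ s ∈ Set.Icc (0:ℝ) 1, HasDerivAt f₁ (f₂ s) s := by
    intro s hs
    haveI : CompleteSpace (Matrix (Fin p) (Fin p) ℝ) := FiniteDimensional.complete ℝ _
    set T : Matrix (Fin p) (Fin p) ℝ →L[ℝ] ℝ :=
      LinearMap.toContinuousLinearMap
        ((Matrix.traceLinearMap (Fin p) ℝ ℝ).comp (LinearMap.mulRight ℝ H)) with hT
    have hTapp : ∀ M : Matrix (Fin p) (Fin p) ℝ, T M = (M * H).trace := by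
      intro M; simp [hT]
    have hinv := aux_hasDerivAt_inv Θ₁ H s (hunit s hs)
    have comp := T.hasFDerivAt.comp_hasDerivAt s hinv
    have comp' : HasDerivAt (fun u : ℝ => ((Θ₁ + u • H)⁻¹ * H).trace)
        (T (-((Θ₁ + s • H)⁻¹ * H * (Θ₁ + s • H)⁻¹))) s := by
      have h' : (⇑T ∘ fun u : ℝ => (Θ₁ + u • H)⁻¹) = fun u : ℝ => ((Θ₁ + u • H)⁻¹ * H).trace := by
        funext u; simp only [Function.comp_apply, hTapp]
      rwa [h'] at comp
    have := comp'.neg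
    refine this.congr_deriv ?_
    rw [hTapp]
    simp [hf₂, Matrix.mul_assoc]
  -- auxiliary function for Cauchy MVT
  set F : ℝ → ℝ := fun s => g 1 - g s - (1 - s) * f₁ s with hF
  set ψ : ℝ → ℝ := fun s => (1 - s) ^ 2 with hψ
  have dF : ∀ s ∈ Set.Icc (0:ℝ) 1, HasDerivAt F (-((1 - s) * f₂ s)) s := by
    intro s hs
    have hA : HasDerivAt (fun u => g 1 - g u) (-(f₁ s)) s := (dg s hs).const_sub (g 1)
    have hlin : HasDerivAt (fun u : ℝ => 1 - u) (-1) s := by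
      simpa using (hasDerivAt_id s).const_sub (1:ℝ)
    have hB : HasDerivAt (fun u : ℝ => (1 - u) * f₁ u)
        ((-1) * f₁ s + (1 - s) * f₂ s) s := hlin.mul (df₁ s hs)
    have := hA.sub hB
    refine this.congr_deriv ?_
    ring
  have dψ : ∀ s : ℝ, HasDerivAt ψ (-(2 * (1 - s))) s := by
    intro s
    have hlin : HasDerivAt (fun u : ℝ => 1 - u) (-1) s := by
      simpa using (hasDerivAt_id s).const_sub (1:ℝ)
    have := hlin.pow 2
    refine this.congr_deriv ?_
    ring
  have hFc : ContinuousOn F (Set.Icc 0 1) := fun s hs =>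
    (dF s hs).continuousAt.continuousWithinAt
  have hψc : ContinuousOn ψ (Set.Icc 0 1) := fun s _ => (dψ s).continuousAt.continuousWithinAt
  obtain ⟨c, hc, hcmvt⟩ := exists_ratio_hasDerivAt_eq_ratio_slope F (fun s => -((1 - s) * f₂ s))
    zero_lt_one hFc (fun x hx => dF x (Set.mem_Icc_of_Ioo hx))
    ψ (fun s => -(2 * (1 - s))) hψc (fun x hx => dψ x)
  -- unpack the MVT identity
  have hc1 : (0:ℝ) < 1 - c := by linarith [hc.2]
  have hψ1 : ψ 1 = 0 := by simp [hψ]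
  have hψ0 : ψ 0 = 1 := by simp [hψ]
  have hF1 : F 1 = 0 := by simp [hF]
  have hF0 : F 0 = g 1 - g 0 - f₁ 0 := by simp [hF]
  have key : f₂ c = 2 * (g 1 - g 0 - f₁ 0) := by
    rw [hψ1, hψ0, hF1, hF0] at hcmvt
    have := hcmvt
    nlinarith [this, hc1]
  -- identify the endpoint values
  have e1 : Θ₁ + (1:ℝ) • H = Θ₂ := by rw [hH]; module
  have e0 : Θ₁ + (0:ℝ) • H = Θ₁ := by simp
  have hklval : g 1 - g 0 - f₁ 0 = 2 * klGauss Θ₁ Θ₂ := by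
    simp only [hg, hf₁, e1, e0, klGauss]
    ring
  refine ⟨1 - c, ⟨by linarith [hc.2], by linarith [hc.1]⟩, ?_⟩
  have eΘ : (1 - c) • Θ₁ + (1 - (1 - c)) • Θ₂ = Θ₁ + c • H := by rw [hH]; module
  rw [eΘ]
  have : klGauss Θ₁ Θ₂ = (1/4) * f₂ c := by
    rw [key, hklval]; ring
  rw [this, hf₂]
end

section
/- Let m ≥ 1 and 1 ≤ d ≤ m/2 be integers. Then there exist M matrices H₁,…,H_M with entries in {0,1} of size m×m such that: (i) every row of each H_i has at most d nonzero entries; (ii) the Hamming distance between any two distinct H_i, H_j is at least md/2; and (iii) log M ≥ (md/16)·log(1 + m/(2d)). -/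
open Matrix MeasureTheory Finset

/-- Hamming distance between two square matrices: the number of entries where they differ. -/
noncomputable def hammingDistM {m : ℕ} (A B : Matrix (Fin m) (Fin m) ℝ) : ℕ :=
  (Finset.univ.filter fun ij : Fin m × Fin m => A ij.1 ij.2 ≠ B ij.1 ij.2).card

/-! ### Auxiliary development for the Varshamov–Gilbert type bound -/

section VGAux

lemma key_poly {p : ℝ} (hp : 0 < p) (hp2 : p ≤ 1/2) : p^11 * (2-p)^16 ≤ 1 := by
  have h2p : (0:ℝ) ≤ 2*p := by linarith
  have hb : (0:ℝ) ≤ (2/3)*(2-p) := by linarith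
  have amgm := Real.geom_mean_le_arith_mean2_weighted (w₁ := 11/27) (w₂ := 16/27)
    (p₁ := 2*p) (p₂ := (2/3)*(2-p)) (by norm_num) (by norm_num) h2p hb (by norm_num)
  have h1 : (11/27) * (2*p) + (16/27) * ((2/3)*(2-p)) ≤ 1 := by nlinarith
  have hx : (2*p) ^ (11/27 : ℝ) * ((2/3)*(2-p)) ^ (16/27 : ℝ) ≤ 1 := le_trans amgm h1
  have hxnn : (0:ℝ) ≤ (2*p) ^ (11/27 : ℝ) * ((2/3)*(2-p)) ^ (16/27 : ℝ) :=
    mul_nonneg (Real.rpow_nonneg h2p _) (Real.rpow_nonneg hb _)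
  have hpow : ((2*p) ^ (11/27 : ℝ) * ((2/3)*(2-p)) ^ (16/27 : ℝ)) ^ (27:ℕ) ≤ 1 :=
    pow_le_one₀ hxnn hx
  have hid : ((2*p) ^ (11/27 : ℝ) * ((2/3)*(2-p)) ^ (16/27 : ℝ)) ^ (27:ℕ)
      = (2*p)^(11:ℕ) * ((2/3)*(2-p))^(16:ℕ) := by
    rw [mul_pow, ← Real.rpow_natCast ((2*p) ^ (11/27 : ℝ)) 27,
        ← Real.rpow_natCast (((2/3)*(2-p)) ^ (16/27 : ℝ)) 27,
        ← Real.rpow_mul h2p, ← Real.rpow_mul hb,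
        ← Real.rpow_natCast (2*p) 11, ← Real.rpow_natCast ((2/3)*(2-p)) 16]
    norm_num
  rw [hid] at hpow
  nlinarith [pow_nonneg hp.le 11, pow_nonneg (show (0:ℝ) ≤ 2-p by linarith) 16,
    mul_pow (2:ℝ) p 11, mul_pow ((2:ℝ)/3) (2-p) 16]

lemma key_log {p : ℝ} (hp : 0 < p) (hp2 : p ≤ 1/2) :
    (1/16) * Real.log (1 + 1/(2*p)) ≤ (3/4) * Real.log (1/p) - Real.log (2-p) := by
  have hinv : (0:ℝ) < 1/p := by positivity
  have h2p : (0:ℝ) < 2 - p := by linarith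
  have hs1 : Real.log (1 + 1/(2*p)) ≤ Real.log (1/p) := by
    apply Real.log_le_log (by positivity)
    rw [← sub_nonneg]
    have h : 1/p - (1 + 1/(2*p)) = (1-2*p)/(2*p) := by field_simp; ring
    rw [h]
    exact div_nonneg (by linarith) (by positivity)
  have hs2 : 16 * Real.log (2-p) ≤ 11 * Real.log (1/p) := by
    have hle : (2-p)^(16:ℕ) ≤ (1/p)^(11:ℕ) := by
      rw [div_pow, one_pow, le_div_iff₀ (by positivity)]
      have := key_poly hp hp2
      nlinarith
    have := Real.log_le_log (by positivity) hle
    rw [Real.log_pow, Real.log_pow] at this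
    push_cast at this
    linarith
  linarith

lemma count_superset {m : ℕ} (d : ℕ) (T : Finset (Fin m)) (hT : T.card ≤ d) :
    ((Finset.univ.filter fun a : Finset (Fin m) => a.card = d ∧ T ⊆ a)).card
      = (m - T.card).choose (d - T.card) := by
  have h1 : (Finset.powersetCard (d - T.card) Tᶜ).card = (m - T.card).choose (d - T.card) := by
    rw [Finset.card_powersetCard, Finset.card_compl, Fintype.card_fin]
  rw [← h1]
  apply Finset.card_bij' (fun a _ => a \ T) (fun b _ => b ∪ T)
  · intro a ha
    rw [Finset.mem_filter] at ha
    obtain ⟨-, hcard, hsub⟩ := ha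
    rw [Finset.mem_powersetCard]
    constructor
    · intro e he
      rw [Finset.mem_compl]
      exact (Finset.mem_sdiff.mp he).2
    · rw [Finset.card_sdiff_of_subset hsub, hcard]
  · intro b hb
    rw [Finset.mem_powersetCard] at hb
    obtain ⟨hsub, hcard⟩ := hb
    have hdisj : Disjoint b T := by
      rw [Finset.disjoint_right]
      intro e heT heb
      exact (Finset.mem_compl.mp (hsub heb)) heT
    rw [Finset.mem_filter]
    refine ⟨Finset.mem_univ _, ?_, Finset.subset_union_right⟩
    rw [Finset.card_union_of_disjoint hdisj, hcard]
    omega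
  · intro a ha
    rw [Finset.mem_filter] at ha
    exact Finset.sdiff_union_of_subset ha.2.2
  · intro b hb
    rw [Finset.mem_powersetCard] at hb
    have hdisj : Disjoint b T := by
      rw [Finset.disjoint_right]
      intro e heT heb
      exact (Finset.mem_compl.mp (hb.1 heb)) heT
    exact Finset.union_sdiff_cancel_right hdisj

lemma choose_bound {m d : ℕ} (hd : 1 ≤ d) (hdm : d ≤ m) :
    ∀ t, t ≤ d → (((m - t).choose (d - t) : ℝ)) ≤ (m.choose d : ℝ) * ((d:ℝ)/m)^t := by
  have hm : 0 < m := lt_of_lt_of_le hd hdm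
  intro t
  induction t with
  | zero => simp
  | succ t ih =>
    intro ht
    have ht' : t ≤ d := by omega
    have htm : t < m := by omega
    have key : (m - t) * ((m - t - 1).choose (d - t - 1)) = (m - t).choose (d - t) * (d - t) := by
      have := Nat.add_one_mul_choose_eq (m - t - 1) (d - t - 1)
      have e1 : m - t - 1 + 1 = m - t := by omega
      have e2 : d - t - 1 + 1 = d - t := by omega
      rw [e1, e2] at this
      exact this
    have e3 : m - (t+1) = m - t - 1 := by omega
    have e4 : d - (t+1) = d - t - 1 := by omega
    rw [e3, e4]
    have hmt : (0:ℝ) < (m:ℝ) - t := by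
      have : (t:ℝ) < m := by exact_mod_cast htm
      linarith
    have em : ((m - t : ℕ):ℝ) = (m:ℝ) - t := by rw [Nat.cast_sub htm.le]
    have ed : ((d - t : ℕ):ℝ) = (d:ℝ) - t := by rw [Nat.cast_sub ht']
    have hkeyR : ((m:ℝ) - t) * ((m - t - 1).choose (d - t - 1) : ℝ)
        = ((m - t).choose (d - t) : ℝ) * ((d:ℝ) - t) := by
      rw [← em, ← ed]; exact_mod_cast key
    have hstep : ((m - t - 1).choose (d - t - 1) : ℝ)
        ≤ ((d:ℝ)/m) * ((m - t).choose (d - t) : ℝ) := by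
      rw [div_mul_eq_mul_div, le_div_iff₀ (by exact_mod_cast hm)]
      have hC : (0:ℝ) ≤ ((m - t).choose (d - t) : ℝ) := by positivity
      have hdm' : (d:ℝ) ≤ m := by exact_mod_cast hdm
      have ht0 : (0:ℝ) ≤ (t:ℝ) := by positivity
      have h5 : ((d:ℝ)-t)*m ≤ d*((m:ℝ)-t) := by nlinarith
      have h6 : ((m - t).choose (d - t) : ℝ) * (((d:ℝ)-t)*m)
          ≤ ((m - t).choose (d - t) : ℝ) * (d*((m:ℝ)-t)) :=
        mul_le_mul_of_nonneg_left h5 hC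
      have h8 := congrArg (· * (m:ℝ)) hkeyR
      have h7 : ((m:ℝ)-t) * (((m - t - 1).choose (d - t - 1) : ℝ) * m)
          ≤ ((m:ℝ)-t) * ((d:ℝ) * ((m - t).choose (d - t) : ℝ)) := by nlinarith [h8, h6]
      exact le_of_mul_le_mul_left h7 hmt
    calc ((m - t - 1).choose (d - t - 1) : ℝ)
        ≤ ((d:ℝ)/m) * ((m - t).choose (d - t) : ℝ) := hstep
      _ ≤ ((d:ℝ)/m) * ((m.choose d : ℝ) * ((d:ℝ)/m)^t) := by
          apply mul_le_mul_of_nonneg_left (ih ht') (by positivity)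
      _ = (m.choose d : ℝ) * ((d:ℝ)/m)^(t+1) := by ring

/-- The set of rows: subsets of `Fin m` of size `d`. -/
def RowSet (m d : ℕ) : Finset (Finset (Fin m)) := Finset.univ.filter (fun a => a.card = d)

/-- Tuples of rows. -/
def Tup (m d : ℕ) : Finset ((Fin m) → Finset (Fin m)) := Fintype.piFinset (fun _ => RowSet m d)

/-- Hamming-type distance between tuples of rows. -/
def distT {m : ℕ} (x y : Fin m → Finset (Fin m)) : ℕ :=
  ∑ i, ((x i \ y i) ∪ (y i \ x i)).card

/-- The 0/1 matrix associated with a tuple of rows. -/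
noncomputable def matOf {m : ℕ} (x : Fin m → Finset (Fin m)) : Matrix (Fin m) (Fin m) ℝ :=
  fun i j => if j ∈ x i then 1 else 0

lemma row_sum_bound {m d : ℕ} (hd : 1 ≤ d) (hdm : d ≤ m) (lam : ℝ) (hlam : 1 ≤ lam)
    (x : Finset (Fin m)) (hx : x.card = d) :
    ∑ a ∈ RowSet m d, lam ^ (x ∩ a).card
      ≤ (m.choose d : ℝ) * (1 + (lam - 1) * ((d:ℝ)/m))^d := by
  have hl0 : (0:ℝ) ≤ lam - 1 := by linarith
  have expand : ∀ a : Finset (Fin m),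
      lam ^ (x ∩ a).card = ∑ T ∈ x.powerset, (if T ⊆ a then (lam-1)^T.card else 0) := by
    intro a
    have h1 : lam ^ (x ∩ a).card = ∏ _e ∈ x ∩ a, ((lam - 1) + 1) := by
      rw [Finset.prod_const, sub_add_cancel]
    have h2 : ∏ _e ∈ x ∩ a, ((lam - 1) + 1)
        = ∑ T ∈ (x ∩ a).powerset, (lam-1)^T.card := by
      rw [Finset.prod_add]
      apply Finset.sum_congr rfl
      intro T _
      simp [Finset.prod_const]
    have h3 : (x ∩ a).powerset = x.powerset.filter (fun T => T ⊆ a) := by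
      ext T
      simp only [Finset.mem_powerset, Finset.mem_filter, Finset.subset_inter_iff]
    rw [h1, h2, h3, Finset.sum_filter]
  unfold RowSet
  simp only [expand]
  rw [Finset.sum_comm]
  have inner : ∀ T ∈ x.powerset,
      (∑ a ∈ Finset.univ.filter (fun a : Finset (Fin m) => a.card = d),
        (if T ⊆ a then (lam-1)^T.card else 0))
      ≤ (m.choose d : ℝ) * ((lam - 1) * ((d:ℝ)/m))^T.card := by
    intro T hT
    have hTx : T ⊆ x := Finset.mem_powerset.mp hT
    have hTd : T.card ≤ d := hx ▸ Finset.card_le_card hTx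
    rw [← Finset.sum_filter, Finset.filter_filter, Finset.sum_const, nsmul_eq_mul,
      count_superset d T hTd]
    calc ((m - T.card).choose (d - T.card) : ℝ) * (lam-1)^T.card
        ≤ ((m.choose d : ℝ) * ((d:ℝ)/m)^T.card) * (lam-1)^T.card := by
          apply mul_le_mul_of_nonneg_right (choose_bound hd hdm T.card hTd) (by positivity)
      _ = (m.choose d : ℝ) * ((lam - 1) * ((d:ℝ)/m))^T.card := by
          rw [mul_pow]; ring
  calc ∑ T ∈ x.powerset, ∑ a ∈ Finset.univ.filter (fun a : Finset (Fin m) => a.card = d),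
        (if T ⊆ a then (lam-1)^T.card else 0)
      ≤ ∑ T ∈ x.powerset, (m.choose d : ℝ) * ((lam - 1) * ((d:ℝ)/m))^T.card :=
        Finset.sum_le_sum inner
    _ = (m.choose d : ℝ) * ∑ T ∈ x.powerset, ((lam - 1) * ((d:ℝ)/m))^T.card := by
        rw [Finset.mul_sum]
    _ = (m.choose d : ℝ) * (1 + (lam - 1) * ((d:ℝ)/m))^d := by
        congr 1
        have := Finset.prod_add (fun _ : Fin m => (lam - 1) * ((d:ℝ)/m)) (fun _ => (1:ℝ)) x
        rw [Finset.prod_const, hx] at this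
        rw [add_comm (1:ℝ) ((lam - 1) * ((d:ℝ)/m)), this]
        apply Finset.sum_congr rfl
        intro T _
        simp [Finset.prod_const]

lemma dist_comm' {m : ℕ} (x y : Fin m → Finset (Fin m)) : distT x y = distT y x := by
  unfold distT
  apply Finset.sum_congr rfl
  intro i _
  rw [Finset.union_comm]

lemma dist_self' {m : ℕ} (x : Fin m → Finset (Fin m)) : distT x x = 0 := by
  unfold distT
  simp

lemma hamming_eq {m : ℕ} (x y : Fin m → Finset (Fin m)) :
    hammingDistM (matOf x) (matOf y) = distT x y := by
  unfold hammingDistM distT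
  rw [Finset.card_filter, Fintype.sum_prod_type]
  apply Finset.sum_congr rfl
  intro i _
  rw [← Finset.card_filter]
  congr 1
  ext j
  rw [Finset.mem_filter]
  by_cases hx : j ∈ x i <;> by_cases hy : j ∈ y i <;>
    simp [matOf, hx, hy]

lemma row_identity {m : ℕ} (s t : Finset (Fin m)) :
    ((s \ t) ∪ (t \ s)).card + 2 * (s ∩ t).card = s.card + t.card := by
  rw [Finset.card_union_of_disjoint disjoint_sdiff_sdiff]
  have h1 := Finset.card_sdiff_add_card_inter s t
  have h2 := Finset.card_sdiff_add_card_inter t s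
  rw [Finset.inter_comm t s] at h2
  omega

lemma exists_maximal_code (m d : ℕ) (hmd : 0 < m * d) :
    ∃ C : Finset (Fin m → Finset (Fin m)), C ⊆ Tup m d ∧
      (∀ u ∈ C, ∀ v ∈ C, u ≠ v → m * d ≤ 2 * distT u v) ∧
      (∀ y ∈ Tup m d, ∃ x ∈ C, 2 * distT x y < m * d) := by
  classical
  set F := (Tup m d).powerset.filter
    (fun C => ∀ u ∈ C, ∀ v ∈ C, u ≠ v → m * d ≤ 2 * distT u v) with hF
  have hne : F.Nonempty := ⟨∅, by simp [hF]⟩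
  obtain ⟨C, hCF, hCmax⟩ := Finset.exists_max_image F Finset.card hne
  rw [hF, Finset.mem_filter, Finset.mem_powerset] at hCF
  obtain ⟨hCsub, hCgood⟩ := hCF
  refine ⟨C, hCsub, hCgood, ?_⟩
  intro y hy
  by_cases hyC : y ∈ C
  · exact ⟨y, hyC, by rw [dist_self']; omega⟩
  · have hins : insert y C ∉ F := by
      intro hmem
      have := hCmax _ hmem
      rw [Finset.card_insert_of_notMem hyC] at this
      omega
    rw [hF, Finset.mem_filter, Finset.mem_powerset] at hins
    push_neg at hins
    have hsub : insert y C ⊆ Tup m d := Finset.insert_subset hy hCsub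
    obtain ⟨u, hu, v, hv, huv, hlt⟩ := hins hsub
    rw [Finset.mem_insert] at hu hv
    rcases hu with rfl | hu
    · rcases hv with rfl | hv
      · exact absurd rfl huv
      · exact ⟨v, hv, by rwa [dist_comm' _ _] at hlt⟩
    · rcases hv with rfl | hv
      · exact ⟨u, hu, by omega⟩
      · exact absurd (hCgood u hu v hv huv) (by omega)

lemma mem_Tup_card {m d : ℕ} {y : Fin m → Finset (Fin m)} (hy : y ∈ Tup m d) (i : Fin m) :
    (y i).card = d := by
  have := Fintype.mem_piFinset.mp hy i
  simpa [RowSet] using this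

lemma ball_bound {m d : ℕ} (hd : 1 ≤ d) (hdm : 2*d ≤ m)
    (x : Fin m → Finset (Fin m)) (hx : x ∈ Tup m d) :
    ((((Tup m d).filter (fun y => 2 * distT x y < m*d)).card : ℝ))
        * ((m:ℝ)/d) ^ ((3:ℝ)*((m:ℝ)*(d:ℝ))/4)
      ≤ ((m.choose d : ℝ) * (2 - (d:ℝ)/m)^d)^m := by
  have hd0 : 0 < d := hd
  have hm0 : 0 < m := by omega
  have hdR : (0:ℝ) < d := by exact_mod_cast hd0
  have hmR : (0:ℝ) < m := by exact_mod_cast hm0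
  set Λ : ℝ := (m:ℝ)/d with hΛ
  have hΛ1 : 1 ≤ Λ := by
    rw [hΛ, le_div_iff₀ hdR]
    have : (2*d : ℝ) ≤ m := by exact_mod_cast hdm
    linarith
  have hΛ0 : 0 < Λ := by positivity
  set E : ℝ := (3:ℝ)*((m:ℝ)*(d:ℝ))/4 with hE
  set ball := (Tup m d).filter (fun y => 2 * distT x y < m*d) with hball
  have step1 : ∀ y ∈ ball, Λ ^ E ≤ Λ ^ (∑ i, (x i ∩ y i).card) := by
    intro y hy
    rw [hball, Finset.mem_filter] at hy
    obtain ⟨hyT, hylt⟩ := hy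
    have hrow : ∀ i : Fin m, ((x i \ y i) ∪ (y i \ x i)).card + 2 * ((x i) ∩ (y i)).card
        = 2*d := by
      intro i
      rw [row_identity, mem_Tup_card hx i, mem_Tup_card hyT i]
      omega
    have hsum : distT x y + 2 * (∑ i, (x i ∩ y i).card) = m * (2*d) := by
      unfold distT
      rw [Finset.mul_sum, ← Finset.sum_add_distrib]
      rw [Finset.sum_congr rfl (fun i _ => hrow i)]
      rw [Finset.sum_const, Finset.card_univ, Fintype.card_fin, smul_eq_mul]
    have h4 : 3 * (m*d) < 4 * (∑ i, (x i ∩ y i).card) := by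
      have hmm : m*(2*d) = 2*(m*d) := by ring
      omega
    have h4R : (3:ℝ) * ((m:ℝ)*(d:ℝ)) < 4 * ((∑ i, (x i ∩ y i).card : ℕ) : ℝ) := by
      exact_mod_cast h4
    have hle : E ≤ ((∑ i, (x i ∩ y i).card : ℕ) : ℝ) := by rw [hE]; linarith
    have := Real.rpow_le_rpow_of_exponent_le hΛ1 hle
    rwa [Real.rpow_natCast] at this
  have step2 : ((ball.card : ℝ)) * Λ ^ E ≤ ∑ y ∈ Tup m d, Λ ^ (∑ i, (x i ∩ y i).card) := by
    calc ((ball.card : ℝ)) * Λ ^ E = ∑ _y ∈ ball, Λ ^ E := by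
          rw [Finset.sum_const, nsmul_eq_mul]
      _ ≤ ∑ y ∈ ball, Λ ^ (∑ i, (x i ∩ y i).card) := Finset.sum_le_sum step1
      _ ≤ ∑ y ∈ Tup m d, Λ ^ (∑ i, (x i ∩ y i).card) := by
          apply Finset.sum_le_sum_of_subset_of_nonneg (Finset.filter_subset _ _)
          intro y _ _
          positivity
  have step3 : ∑ y ∈ Tup m d, Λ ^ (∑ i, (x i ∩ y i).card)
      = ∏ i : Fin m, ∑ a ∈ RowSet m d, Λ ^ ((x i) ∩ a).card := by
    rw [Finset.prod_univ_sum]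
    apply Finset.sum_congr rfl
    intro y _
    rw [Finset.prod_pow_eq_pow_sum]
  have hrewrite : 1 + (Λ - 1) * ((d:ℝ)/m) = 2 - (d:ℝ)/m := by
    rw [hΛ]; field_simp; ring
  have step4 : ∏ i : Fin m, ∑ a ∈ RowSet m d, Λ ^ ((x i) ∩ a).card
      ≤ ((m.choose d : ℝ) * (2 - (d:ℝ)/m)^d)^m := by
    have hbound : ∀ i : Fin m, ∑ a ∈ RowSet m d, Λ ^ ((x i) ∩ a).card
        ≤ (m.choose d : ℝ) * (2 - (d:ℝ)/m)^d := by
      intro i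
      have h := row_sum_bound hd (by omega) Λ hΛ1 (x i) (mem_Tup_card hx i)
      rwa [hrewrite] at h
    calc ∏ i : Fin m, ∑ a ∈ RowSet m d, Λ ^ ((x i) ∩ a).card
        ≤ ∏ _i : Fin m, ((m.choose d : ℝ) * (2 - (d:ℝ)/m)^d) :=
          Finset.prod_le_prod (fun i _ => Finset.sum_nonneg fun a _ => by positivity)
            (fun i _ => hbound i)
      _ = ((m.choose d : ℝ) * (2 - (d:ℝ)/m)^d)^m := by
          rw [Finset.prod_const, Finset.card_univ, Fintype.card_fin]
  calc ((ball.card : ℝ)) * Λ ^ E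
      ≤ ∑ y ∈ Tup m d, Λ ^ (∑ i, (x i ∩ y i).card) := step2
    _ = ∏ i : Fin m, ∑ a ∈ RowSet m d, Λ ^ ((x i) ∩ a).card := step3
    _ ≤ ((m.choose d : ℝ) * (2 - (d:ℝ)/m)^d)^m := step4

end VGAux

theorem stmt_5 (m d : ℕ) (hm : 1 ≤ m) (hd : 1 ≤ d) (hdm : 2 * d ≤ m) :
    ∃ (M : ℕ) (H : Fin M → Matrix (Fin m) (Fin m) ℝ),
      (∀ a i j, H a i j = 0 ∨ H a i j = 1) ∧
      (∀ a i, (Finset.univ.filter fun j => H a i j ≠ 0).card ≤ d) ∧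
      (∀ a b, a ≠ b → (m * d : ℝ) / 2 ≤ (hammingDistM (H a) (H b) : ℝ)) ∧
      (m * d : ℝ) / 16 * Real.log (1 + (m : ℝ) / (2 * d)) ≤ Real.log M := by
  classical
  have hd0 : 0 < d := hd
  have hm0 : 0 < m := hm
  have hdm' : d ≤ m := by omega
  have hdR : (0:ℝ) < d := by exact_mod_cast hd0
  have hmR : (0:ℝ) < m := by exact_mod_cast hm0
  have hmd : 0 < m * d := Nat.mul_pos hm0 hd0
  obtain ⟨C, hCsub, hCgood, hCcov⟩ := exists_maximal_code m d hmd
  refine ⟨C.card, fun a => matOf ((C.equivFin.symm a) : _), ?_, ?_, ?_, ?_⟩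
  · intro a i j
    by_cases h : j ∈ ((C.equivFin.symm a : _) : Fin m → Finset (Fin m)) i <;>
      simp [matOf, h]
  · intro a i
    set u := ((C.equivFin.symm a : _) : Fin m → Finset (Fin m)) with hu
    have huT : u ∈ Tup m d := hCsub (C.equivFin.symm a).2
    have : (Finset.univ.filter fun j => matOf u i j ≠ 0) = u i := by
      ext j
      by_cases h : j ∈ u i <;> simp [matOf, h]
    rw [this, mem_Tup_card huT i]
  · intro a b hab
    set u := ((C.equivFin.symm a : _) : Fin m → Finset (Fin m)) with hu
    set v := ((C.equivFin.symm b : _) : Fin m → Finset (Fin m)) with hv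
    have huv : u ≠ v := by
      intro h
      apply hab
      have : C.equivFin.symm a = C.equivFin.symm b := Subtype.ext h
      simpa using congrArg C.equivFin this
    have hdist := hCgood u (C.equivFin.symm a).2 v (C.equivFin.symm b).2 huv
    rw [hamming_eq]
    have : ((m*d : ℕ):ℝ) ≤ ((2 * distT u v : ℕ):ℝ) := by exact_mod_cast hdist
    push_cast at this
    linarith
  · -- the counting bound
    set N := m.choose d with hN
    have hN0 : 0 < N := Nat.choose_pos hdm'
    have hNR : (0:ℝ) < N := by exact_mod_cast hN0
    set Λ : ℝ := (m:ℝ)/d with hΛ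
    have hΛ1 : 1 ≤ Λ := by
      rw [hΛ, le_div_iff₀ hdR]
      have : (2*d : ℝ) ≤ m := by exact_mod_cast hdm
      linarith
    have hΛ0 : 0 < Λ := by positivity
    set E : ℝ := (3:ℝ)*((m:ℝ)*(d:ℝ))/4 with hE
    set p : ℝ := (d:ℝ)/m with hp
    have hp0 : 0 < p := by positivity
    have hp2 : p ≤ 1/2 := by
      rw [hp, div_le_iff₀ hmR]
      have : (2*d : ℝ) ≤ m := by exact_mod_cast hdm
      linarith
    have h2p : (0:ℝ) < 2 - p := by linarith
    -- cardinality of Tup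
    have hTcard : (Tup m d).card = N ^ m := by
      rw [Tup, Fintype.card_piFinset]
      have hRS : (RowSet m d).card = N := by
        have : RowSet m d = Finset.powersetCard d Finset.univ := by
          ext a
          simp [RowSet, Finset.mem_powersetCard_univ]
        rw [this, Finset.card_powersetCard, Finset.card_univ, Fintype.card_fin]
      simp [hRS]
    -- covering
    have hcover : Tup m d ⊆ C.biUnion
        (fun x => (Tup m d).filter (fun y => 2 * distT x y < m*d)) := by
      intro y hy
      obtain ⟨x, hxC, hlt⟩ := hCcov y hy
      exact Finset.mem_biUnion.mpr ⟨x, hxC, Finset.mem_filter.mpr ⟨hy, hlt⟩⟩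
    have hcard : (Tup m d).card ≤ ∑ x ∈ C,
        ((Tup m d).filter (fun y => 2 * distT x y < m*d)).card :=
      le_trans (Finset.card_le_card hcover) Finset.card_biUnion_le
    -- real-valued chain
    have hcardR : ((N:ℝ))^m * Λ^E ≤ (C.card : ℝ) * ((N:ℝ) * (2 - p)^d)^m := by
      have h1 : ((N:ℝ))^m ≤ ∑ x ∈ C,
          (((Tup m d).filter (fun y => 2 * distT x y < m*d)).card : ℝ) := by
        have h1' : N^m ≤ ∑ x ∈ C,
            ((Tup m d).filter (fun y => 2 * distT x y < m*d)).card := hTcard ▸ hcard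
        exact_mod_cast h1'
      have h2 : ((N:ℝ))^m * Λ^E ≤ ∑ x ∈ C,
          (((Tup m d).filter (fun y => 2 * distT x y < m*d)).card : ℝ) * Λ^E := by
        rw [← Finset.sum_mul]
        exact mul_le_mul_of_nonneg_right h1 (by positivity)
      refine le_trans h2 ?_
      calc ∑ x ∈ C, (((Tup m d).filter (fun y => 2 * distT x y < m*d)).card : ℝ) * Λ^E
          ≤ ∑ _x ∈ C, ((N:ℝ) * (2 - p)^d)^m := by
            apply Finset.sum_le_sum
            intro x hx
            exact ball_bound hd hdm x (hCsub hx)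
        _ = (C.card : ℝ) * ((N:ℝ) * (2 - p)^d)^m := by
            rw [Finset.sum_const, nsmul_eq_mul]
    have hMain : Λ^E ≤ (C.card : ℝ) * (2 - p)^(d*m) := by
      have hNm : (0:ℝ) < ((N:ℝ))^m := by positivity
      rw [mul_pow, ← pow_mul] at hcardR
      have hcomm : (C.card : ℝ) * (((N:ℝ))^m * (2-p)^(d*m))
          = ((N:ℝ))^m * ((C.card : ℝ) * (2-p)^(d*m)) := by ring
      rw [hcomm] at hcardR
      exact le_of_mul_le_mul_left hcardR hNm
    have hM0 : 0 < C.card := by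
      by_contra h
      push_neg at h
      have hz : C.card = 0 := by omega
      rw [hz] at hMain
      have hpos : (0:ℝ) < Λ^E := Real.rpow_pos_of_pos hΛ0 E
      push_cast at hMain
      nlinarith
    have hMR : (0:ℝ) < (C.card : ℝ) := by exact_mod_cast hM0
    have hlog := Real.log_le_log (Real.rpow_pos_of_pos hΛ0 E) hMain
    rw [Real.log_rpow hΛ0, Real.log_mul (ne_of_gt hMR) (by positivity),
      Real.log_pow] at hlog
    have hkey := key_log hp0 hp2
    have e1 : 1/p = Λ := by rw [hp, hΛ, one_div_div]
    have e2 : 1 + 1/(2*p) = 1 + (m:ℝ)/(2*(d:ℝ)) := by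
      rw [hp]
      congr 1
      field_simp
    rw [e1, e2] at hkey
    have hmdR : (0:ℝ) ≤ (m:ℝ)*(d:ℝ) := by positivity
    have hfin := mul_le_mul_of_nonneg_left hkey hmdR
    have hcast : ((d*m : ℕ):ℝ) = (d:ℝ)*(m:ℝ) := by push_cast; ring
    rw [hcast, hE] at hlog
    nlinarith [hfin, hlog]
end

section
/- Let B* be a p×p real matrix with ‖B*‖_op < 1 and zero diagonal, and set A = (I − B*)⁻¹. Let H be a p×p matrix with zero diagonal and set G = H·A. Write G_D for the diagonal part of G and G_{D^c} for the off-diagonal part. Then ‖G‖_F² ≤ 2‖G_{D^c}‖_F². -/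
open Matrix MeasureTheory Finset

theorem stmt_8 {p : ℕ} (Bstar H : Matrix (Fin p) (Fin p) ℝ)
    (hBdiag : ∀ i, Bstar i i = 0) (hBop : opNorm Bstar < 1)
    (hHdiag : ∀ i, H i i = 0) :
    frobSq (H * (1 - Bstar)⁻¹) ≤
      2 * frobSq (H * (1 - Bstar)⁻¹ -
        Matrix.diagonal (fun i => (H * (1 - Bstar)⁻¹) i i)) := by
  set e := Matrix.toEuclideanCLM (𝕜 := ℝ) (n := Fin p) with he
  set G := H * (1 - Bstar)⁻¹ with hGdef
  -- invertibility of 1 - Bstar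
  have hunit : IsUnit ((1 : Matrix (Fin p) (Fin p) ℝ) - Bstar) := by
    have h1 : IsUnit ((1 : EuclideanSpace ℝ (Fin p) →L[ℝ] EuclideanSpace ℝ (Fin p)) - e Bstar) :=
      (Units.oneSub (e Bstar) hBop).isUnit
    have h2 : e (1 - Bstar) = 1 - e Bstar := by
      rw [map_sub, _root_.map_one]
    rw [← h2] at h1
    have := h1.map e.symm
    simpa using this
  have hdet : IsUnit ((1 : Matrix (Fin p) (Fin p) ℝ) - Bstar).det :=
    (Matrix.isUnit_iff_isUnit_det _).mp hunit
  have hGmul : G * (1 - Bstar) = H := by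
    rw [hGdef, Matrix.mul_assoc, Matrix.nonsing_inv_mul _ hdet, Matrix.mul_one]
  -- diagonal identity
  have hGdiag : ∀ i, G i i = ∑ k ∈ univ.erase i, G i k * Bstar k i := by
    intro i
    have h0 : (G * (1 - Bstar)) i i = 0 := by rw [hGmul]; exact hHdiag i
    rw [Matrix.mul_apply] at h0
    have hexp : ∀ k, G i k * ((1 : Matrix (Fin p) (Fin p) ℝ) - Bstar) k i
        = G i k * (if k = i then (1:ℝ) else 0) - G i k * Bstar k i := by
      intro k
      simp [Matrix.sub_apply, Matrix.one_apply, mul_sub]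
    rw [Finset.sum_congr rfl (fun k _ => hexp k), Finset.sum_sub_distrib] at h0
    have h1 : ∑ k, G i k * (if k = i then (1:ℝ) else 0) = G i i := by
      simp
    rw [h1, sub_eq_zero] at h0
    rw [h0, ← Finset.add_sum_erase _ _ (Finset.mem_univ i), hBdiag i, mul_zero, zero_add]
  -- column norms of Bstar are at most 1
  have hcol : ∀ i, ∑ k, (Bstar k i) ^ 2 ≤ 1 := by
    intro i
    have hnn : (0:ℝ) ≤ opNorm Bstar := norm_nonneg _
    set x : EuclideanSpace ℝ (Fin p) := (WithLp.equiv 2 _).symm (Pi.single i 1) with hx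
    have hxnorm : ‖x‖ = 1 := by
      rw [EuclideanSpace.norm_eq]
      have : ∀ j, ‖x j‖ ^ 2 = if j = i then (1:ℝ) else 0 := by
        intro j
        by_cases h : j = i <;> simp [hx, Pi.single_apply, h]
      rw [Finset.sum_congr rfl (fun j _ => this j)]
      simp
    have happ : e Bstar x = (WithLp.equiv 2 _).symm (Bstar.mulVec (Pi.single i 1)) := by
      rw [hx]; rfl
    have hmv : Bstar.mulVec (Pi.single i 1) = fun k => Bstar k i := by
      funext k
      simp [Matrix.mulVec, dotProduct, Pi.single_apply]
    have hle : ‖e Bstar x‖ ≤ opNorm Bstar := by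
      calc ‖e Bstar x‖ ≤ ‖e Bstar‖ * ‖x‖ := (e Bstar).le_opNorm x
        _ = opNorm Bstar := by rw [hxnorm, mul_one]; rfl
    have hsq : ‖e Bstar x‖ ^ 2 = ∑ k, (Bstar k i) ^ 2 := by
      rw [EuclideanSpace.norm_eq, Real.sq_sqrt (by positivity)]
      refine Finset.sum_congr rfl fun k _ => ?_
      rw [happ, hmv]
      simp [Real.norm_eq_abs, sq_abs]
    calc ∑ k, (Bstar k i) ^ 2 = ‖e Bstar x‖ ^ 2 := hsq.symm
      _ ≤ opNorm Bstar ^ 2 := by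
          have := pow_le_pow_left₀ (norm_nonneg _) hle 2
          exact this
      _ ≤ 1 := by nlinarith
  -- diagonal entries bounded by off-diagonal row sums
  have hdbound : ∀ i, (G i i) ^ 2 ≤ ∑ k ∈ univ.erase i, (G i k) ^ 2 := by
    intro i
    have hCS := Finset.sum_mul_sq_le_sq_mul_sq (univ.erase i)
      (fun k => G i k) (fun k => Bstar k i)
    have hb : ∑ k ∈ univ.erase i, (Bstar k i) ^ 2 ≤ 1 := by
      refine le_trans ?_ (hcol i)
      exact Finset.sum_le_sum_of_subset_of_nonneg (Finset.erase_subset _ _)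
        (fun k _ _ => sq_nonneg _)
    have hGse : ∑ k ∈ univ.erase i, (G i k) ^ 2 ≥ 0 :=
      Finset.sum_nonneg fun k _ => sq_nonneg _
    calc (G i i) ^ 2 = (∑ k ∈ univ.erase i, G i k * Bstar k i) ^ 2 := by rw [hGdiag i]
      _ ≤ (∑ k ∈ univ.erase i, (G i k) ^ 2) * (∑ k ∈ univ.erase i, (Bstar k i) ^ 2) := hCS
      _ ≤ (∑ k ∈ univ.erase i, (G i k) ^ 2) * 1 := by
          exact mul_le_mul_of_nonneg_left hb hGse
      _ = ∑ k ∈ univ.erase i, (G i k) ^ 2 := mul_one _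
  -- compute frobSq of off-diagonal part
  have hoff : frobSq (G - Matrix.diagonal (fun i => G i i))
      = ∑ i, ∑ j ∈ univ.erase i, (G i j) ^ 2 := by
    unfold frobSq
    refine Finset.sum_congr rfl fun i _ => ?_
    rw [← Finset.add_sum_erase _ (fun j => ((G - Matrix.diagonal fun i => G i i) i j) ^ 2)
      (Finset.mem_univ i)]
    have h1 : ((G - Matrix.diagonal fun i => G i i) i i) ^ 2 = 0 := by
      simp [Matrix.sub_apply, Matrix.diagonal_apply_eq]
    rw [h1, zero_add]
    refine Finset.sum_congr rfl fun j hj => ?_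
    have hji : j ≠ i := Finset.ne_of_mem_erase hj
    simp [Matrix.sub_apply, Matrix.diagonal_apply_ne' _ hji]
  rw [hoff]
  unfold frobSq
  have hrow : ∀ i, ∑ j, (G i j) ^ 2 = (G i i) ^ 2 + ∑ j ∈ univ.erase i, (G i j) ^ 2 :=
    fun i => (Finset.add_sum_erase _ _ (Finset.mem_univ i)).symm
  calc ∑ i, ∑ j, (G i j) ^ 2
      = ∑ i, ((G i i) ^ 2 + ∑ j ∈ univ.erase i, (G i j) ^ 2) :=
        Finset.sum_congr rfl fun i _ => hrow i
    _ ≤ ∑ i, (2 * ∑ j ∈ univ.erase i, (G i j) ^ 2) := by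
        refine Finset.sum_le_sum fun i _ => ?_
        have := hdbound i
        linarith
    _ = 2 * ∑ i, ∑ j ∈ univ.erase i, (G i j) ^ 2 := by rw [Finset.mul_sum]
end

section
/- Let Θ*, Θ be symmetric positive definite p×p matrices and Σ̂ a positive semidefinite matrix, and let ℓ(Θ, Σ̂) = Tr(Σ̂Θ) − log det Θ. If ‖Θ − Θ*‖_F ≤ R for some R > 0 and ‖Θ*‖_op ≤ K, then ℓ(Θ, Σ̂) − ℓ(Θ*, Σ̂) ≥ Tr((Σ̂ − (Θ*)⁻¹)(Θ − Θ*)) + (1/2)(K + R)^{−2} ‖Θ − Θ*‖_F². -/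
open Matrix MeasureTheory Finset

/-- Negative Gaussian log-likelihood as a function of the precision matrix. -/
noncomputable def negLogLik {p : ℕ} (Θ Sighat : Matrix (Fin p) (Fin p) ℝ) : ℝ :=
  (Sighat * Θ).trace - Real.log Θ.det

lemma frobSq_nonneg {p : ℕ} (M : Matrix (Fin p) (Fin p) ℝ) : 0 ≤ frobSq M := by
  apply Finset.sum_nonneg; intros; apply Finset.sum_nonneg; intros; positivity

lemma quad_le_opNorm {p : ℕ} (M : Matrix (Fin p) (Fin p) ℝ) (v : Fin p → ℝ)
    (hv : v ⬝ᵥ v = 1) : v ⬝ᵥ (M *ᵥ v) ≤ opNorm M := by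
  set u : EuclideanSpace ℝ (Fin p) := (WithLp.equiv 2 _).symm v with hu
  have happ : Matrix.toEuclideanCLM (𝕜 := ℝ) M u = (WithLp.equiv 2 _).symm (M *ᵥ v) :=
    Matrix.toEuclideanCLM_toLp M v
  have hinner : ∀ w : Fin p → ℝ, (inner ℝ u ((WithLp.equiv 2 _).symm w) : ℝ) = v ⬝ᵥ w := by
    intro w
    simp [hu, PiLp.inner_apply, dotProduct, mul_comm]
  have hnu : ‖u‖ ^ 2 = 1 := by
    rw [← real_inner_self_eq_norm_sq]
    have := hinner v
    simp only [hv] at this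
    simpa [hu] using this
  have hnu1 : ‖u‖ = 1 := by nlinarith [norm_nonneg u]
  have hle := (Matrix.toEuclideanCLM (𝕜 := ℝ) M).le_opNorm u
  calc v ⬝ᵥ (M *ᵥ v) = (inner ℝ u (Matrix.toEuclideanCLM (𝕜 := ℝ) M u) : ℝ) := by
        rw [happ, hinner]
      _ ≤ ‖u‖ * ‖Matrix.toEuclideanCLM (𝕜 := ℝ) M u‖ := real_inner_le_norm _ _
      _ ≤ ‖u‖ * (‖Matrix.toEuclideanCLM (𝕜 := ℝ) M‖ * ‖u‖) := by
        nlinarith [norm_nonneg u, norm_nonneg (Matrix.toEuclideanCLM (𝕜 := ℝ) M)]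
      _ = opNorm M := by rw [hnu1, opNorm]; ring

lemma quad_le_frob {p : ℕ} (M : Matrix (Fin p) (Fin p) ℝ) (v : Fin p → ℝ)
    (hv : v ⬝ᵥ v = 1) : v ⬝ᵥ (M *ᵥ v) ≤ Real.sqrt (frobSq M) := by
  have hexp : v ⬝ᵥ (M *ᵥ v) = ∑ q : Fin p × Fin p, (v q.1 * v q.2) * M q.1 q.2 := by
    rw [← Finset.univ_product_univ, Finset.sum_product]
    simp only [dotProduct, mulVec, Finset.mul_sum]
    exact Finset.sum_congr rfl fun i _ => Finset.sum_congr rfl fun j _ => by ring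
  have hcs := Finset.sum_mul_sq_le_sq_mul_sq (univ : Finset (Fin p × Fin p))
      (fun q => v q.1 * v q.2) (fun q => M q.1 q.2)
  have h1 : ∑ q : Fin p × Fin p, (v q.1 * v q.2) ^ 2 = 1 := by
    rw [← Finset.univ_product_univ, Finset.sum_product]
    have : ∀ i, ∑ j, (v i * v j)^2 = (v i)^2 * ∑ j, (v j)^2 := by
      intro i; rw [Finset.mul_sum]; exact Finset.sum_congr rfl fun j _ => by ring
    rw [Finset.sum_congr rfl fun i _ => this i, ← Finset.sum_mul]
    have hv2 : ∑ j, (v j)^2 = 1 := by simpa [dotProduct, pow_two] using hv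
    rw [hv2]; ring
  have h2 : ∑ q : Fin p × Fin p, (M q.1 q.2) ^ 2 = frobSq M := by
    rw [← Finset.univ_product_univ, Finset.sum_product]; rfl
  rw [h1, h2, one_mul] at hcs
  have : (v ⬝ᵥ (M *ᵥ v))^2 ≤ frobSq M := by rw [hexp]; exact hcs
  calc v ⬝ᵥ (M *ᵥ v) ≤ |v ⬝ᵥ (M *ᵥ v)| := le_abs_self _
    _ = Real.sqrt ((v ⬝ᵥ (M *ᵥ v))^2) := (Real.sqrt_sq_eq_abs _).symm
    _ ≤ Real.sqrt (frobSq M) := Real.sqrt_le_sqrt this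

lemma posdef_conj {p : ℕ} {B N : Matrix (Fin p) (Fin p) ℝ} (hB : B.PosDef)
    (hN : IsUnit N.det) : (N * B * Nᴴ).PosDef := by
  refine Matrix.PosDef.of_dotProduct_mulVec_pos (Matrix.isHermitian_mul_mul_conjTranspose N hB.1) fun x hx => ?_
  have hx' : Nᴴ *ᵥ x ≠ 0 := by
    have : Function.Injective (Nᴴ.mulVec) := by
      rw [Matrix.mulVec_injective_iff_isUnit]
      exact (Matrix.isUnit_iff_isUnit_det _).2 (by simpa [Matrix.det_conjTranspose] using hN)
    intro h
    exact hx (this (by simpa using h))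
  have := hB.dotProduct_mulVec_pos hx'
  simpa only [star_mulVec, Matrix.dotProduct_mulVec, Matrix.vecMul_vecMul,
    Matrix.conjTranspose_conjTranspose, Matrix.mul_assoc] using this

lemma posdef_smul {p : ℕ} {B : Matrix (Fin p) (Fin p) ℝ} (hB : B.PosDef) {c : ℝ}
    (hc : 0 < c) : (c • B).PosDef := by
  refine Matrix.PosDef.of_dotProduct_mulVec_pos ?_ fun x hx => ?_
  · unfold Matrix.IsHermitian
    rw [Matrix.conjTranspose_smul, hB.1]
    simp
  · rw [Matrix.smul_mulVec, dotProduct_smul]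
    exact mul_pos hc (hB.dotProduct_mulVec_pos hx)

lemma frob_eq_trace {p : ℕ} (X : Matrix (Fin p) (Fin p) ℝ) (hX : X.IsHermitian) :
    (X * X).trace = frobSq X := by
  have hXsymm : ∀ i j, X j i = X i j := by
    intro i j
    calc X j i = Xᴴ i j := by simp [Matrix.conjTranspose_apply]
      _ = X i j := by rw [hX]
  rw [Matrix.trace, frobSq]
  simp only [Matrix.diag_apply, Matrix.mul_apply]
  apply Finset.sum_congr rfl; intro i _
  apply Finset.sum_congr rfl; intro j _
  rw [hXsymm i j]; ring

open scoped MatrixOrder in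
lemma exists_sqrt_posDef {p : ℕ} {A : Matrix (Fin p) (Fin p) ℝ} (h : A.PosDef) :
    ∃ s : Matrix (Fin p) (Fin p) ℝ, s.IsHermitian ∧ s * s = A :=
  ⟨CFC.sqrt A, (CFC.sqrt_nonneg A).posSemidef.1, CFC.sqrt_mul_sqrt_self A h.posSemidef.nonneg⟩

lemma key_trace {p : ℕ} (M X : Matrix (Fin p) (Fin p) ℝ) (hM : M.PosDef) (hX : X.IsHermitian)
    (L : ℝ) (hL : 0 < L) (hev : ∀ i, hM.1.eigenvalues i ≤ L) :
    (L ^ 2)⁻¹ * (X * X).trace ≤ (M⁻¹ * X * (M⁻¹ * X)).trace := by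
  set d := hM.1.eigenvalues with hd_def
  set U : Matrix (Fin p) (Fin p) ℝ := (Matrix.IsHermitian.eigenvectorUnitary hM.1 : Matrix (Fin p) (Fin p) ℝ) with hU_def
  have hU1 : U * star U = 1 := (Matrix.mem_unitaryGroup_iff).mp (Matrix.IsHermitian.eigenvectorUnitary hM.1).2
  have hU2 : star U * U = 1 := (Matrix.mem_unitaryGroup_iff').mp (Matrix.IsHermitian.eigenvectorUnitary hM.1).2
  have hcan1 : ∀ Z : Matrix (Fin p) (Fin p) ℝ, star U * (U * Z) = Z := fun Z => by
    rw [← Matrix.mul_assoc, hU2, Matrix.one_mul]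
  have hcan2 : ∀ Z : Matrix (Fin p) (Fin p) ℝ, U * (star U * Z) = Z := fun Z => by
    rw [← Matrix.mul_assoc, hU1, Matrix.one_mul]
  have hd : ∀ i, 0 < d i := fun i => hM.eigenvalues_pos i
  have hMspec : M = U * diagonal d * star U := by
    have := hM.1.spectral_theorem
    simpa using this
  have hdd : diagonal d * diagonal (fun i => (d i)⁻¹) = 1 := by
    rw [Matrix.diagonal_mul_diagonal]
    have : (fun i => d i * (d i)⁻¹) = fun _ => (1:ℝ) := by
      funext i; exact mul_inv_cancel₀ (hd i).ne'
    rw [this, Matrix.diagonal_one]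
  have hMinv : M⁻¹ = U * diagonal (fun i => (d i)⁻¹) * star U := by
    apply Matrix.inv_eq_right_inv
    rw [hMspec]
    simp only [Matrix.mul_assoc, hcan1]
    rw [← Matrix.mul_assoc (diagonal d), hdd, Matrix.one_mul, hU1]
  set Y := star U * X * U with hY_def
  have hYsymm : ∀ i j, Y j i = Y i j := by
    intro i j
    have hy : Y.IsHermitian := Matrix.isHermitian_conjTranspose_mul_mul U hX
    calc Y j i = Yᴴ i j := by simp [Matrix.conjTranspose_apply]
      _ = Y i j := by rw [hy]
  set D' : Matrix (Fin p) (Fin p) ℝ := diagonal (fun i => (d i)⁻¹) with hD'_def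
  set T := D' * Y with hT_def
  have hEq : M⁻¹ * X * (M⁻¹ * X) = U * (T * T) * star U := by
    rw [hMinv, hT_def, hY_def]
    simp only [Matrix.mul_assoc, hcan1, hcan2, hU1, Matrix.mul_one]
  have htr1 : (M⁻¹ * X * (M⁻¹ * X)).trace = (T * T).trace := by
    rw [hEq, Matrix.trace_mul_cycle, ← Matrix.mul_assoc, hU2, Matrix.one_mul]
  have htr2 : (X * X).trace = (Y * Y).trace := by
    have hYY' : Y * Y = star U * (X * (X * U)) := by
      rw [hY_def]; simp only [Matrix.mul_assoc, hcan2]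
    rw [hYY', Matrix.trace_mul_comm (star U) (X * (X * U))]
    simp only [Matrix.mul_assoc, hU1, Matrix.mul_one]
  rw [htr1, htr2]
  have hTT : (T * T).trace = ∑ i, ∑ j, (d i)⁻¹ * (d j)⁻¹ * (Y i j)^2 := by
    rw [Matrix.trace]
    have hTapp : ∀ i j, T i j = (d i)⁻¹ * Y i j := by
      intro i j; rw [hT_def, hD'_def, Matrix.diagonal_mul]
    simp only [Matrix.diag_apply, Matrix.mul_apply, hTapp]
    apply Finset.sum_congr rfl; intro i _
    apply Finset.sum_congr rfl; intro j _
    rw [hYsymm i j]; ring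
  have hYY : (Y * Y).trace = ∑ i, ∑ j, (Y i j)^2 := by
    rw [Matrix.trace]
    simp only [Matrix.diag_apply, Matrix.mul_apply]
    apply Finset.sum_congr rfl; intro i _
    apply Finset.sum_congr rfl; intro j _
    rw [hYsymm i j]; ring
  rw [hTT, hYY, Finset.mul_sum]
  apply Finset.sum_le_sum; intro i _
  rw [Finset.mul_sum]
  apply Finset.sum_le_sum; intro j _
  have h1 : L⁻¹ ≤ (d i)⁻¹ := inv_anti₀ (hd i) (hev i)
  have h2 : L⁻¹ ≤ (d j)⁻¹ := inv_anti₀ (hd j) (hev j)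
  have hLinv : (0:ℝ) < L⁻¹ := by positivity
  have : (L^2)⁻¹ ≤ (d i)⁻¹ * (d j)⁻¹ := by
    rw [pow_two, mul_inv]
    exact mul_le_mul h1 h2 (le_of_lt hLinv) (inv_nonneg.mpr (hd i).le)
  nlinarith [sq_nonneg (Y i j)]

-- eigenvalue bound via quadratic forms
lemma eigenvalue_le {p : ℕ} (M : Matrix (Fin p) (Fin p) ℝ) (hM : M.IsHermitian) (L : ℝ)
    (hq : ∀ v : Fin p → ℝ, v ⬝ᵥ v = 1 → v ⬝ᵥ (M *ᵥ v) ≤ L) (i : Fin p) :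
    hM.eigenvalues i ≤ L := by
  have hev := hM.eigenvalues_eq i
  set v : Fin p → ℝ := ⇑(hM.eigenvectorBasis i) with hv_def
  have hnorm : ‖hM.eigenvectorBasis i‖ = 1 := hM.eigenvectorBasis.orthonormal.1 i
  have hvv : v ⬝ᵥ v = 1 := by
    have h1 : ‖hM.eigenvectorBasis i‖ = Real.sqrt (∑ j, (v j)^2) := by
      rw [EuclideanSpace.norm_eq]
      congr 1
      apply Finset.sum_congr rfl; intro j _
      rw [Real.norm_eq_abs, sq_abs]
    rw [h1] at hnorm
    have : ∑ j, (v j)^2 = 1 := Real.sqrt_eq_one.mp hnorm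
    simpa [dotProduct, pow_two] using this
  have : hM.eigenvalues i = v ⬝ᵥ (M *ᵥ v) := by
    rw [hev]
    simp [dotProduct]
  rw [this]
  exact hq v hvv

lemma scalar_ineq {p : ℕ} (ν : Fin p → ℝ) (hν : ∀ i, 0 < 1 + ν i) (c : ℝ)
    (hpt : ∀ t ∈ Set.Ioo (0:ℝ) 1, c ≤ ∑ i, (ν i / (1 + t * ν i))^2) :
    c / 2 ≤ ∑ i, (ν i - Real.log (1 + ν i)) := by
  set Φ : ℝ → ℝ := fun t =>
    (∑ i, (-(ν i + 1)/(1 + t*ν i) - Real.log (1 + t*ν i))) - (t - t^2/2) * c with hΦ_def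
  have hpos : ∀ t ∈ Set.Icc (0:ℝ) 1, ∀ i, 0 < 1 + t * ν i := by
    intro t ht i
    rcases eq_or_lt_of_le ht.1 with h0 | h0
    · rw [← h0]; norm_num
    · have := mul_pos h0 (hν i)
      nlinarith [ht.2]
  have hder : ∀ t, (∀ i, 0 < 1 + t * ν i) →
      HasDerivAt Φ ((1-t) * ((∑ i, (ν i/(1+t*ν i))^2) - c)) t := by
    intro t hti
    have hsum : HasDerivAt (fun s => ∑ i, (-(ν i + 1)/(1 + s*ν i) - Real.log (1 + s*ν i)))
        (∑ i, ((ν i + 1) * ν i/(1+t*ν i)^2 - ν i/(1+t*ν i))) t := by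
      apply HasDerivAt.fun_sum
      intro i _
      have hgi : HasDerivAt (fun s : ℝ => 1 + s * ν i) (ν i) t := by
        simpa using ((hasDerivAt_id t).mul_const (ν i)).const_add 1
      have hne : 1 + t * ν i ≠ 0 := (hti i).ne'
      have hdiv : HasDerivAt (fun s => -(ν i + 1)/(1 + s*ν i))
          ((ν i + 1) * ν i/(1+t*ν i)^2) t := by
        have h := (hasDerivAt_const t (-(ν i + 1))).div hgi hne
        exact h.congr_deriv (by ring)
      have hlog : HasDerivAt (fun s => Real.log (1 + s*ν i)) (ν i/(1+t*ν i)) t :=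
        hgi.log hne
      exact hdiv.sub hlog
    have hpoly : HasDerivAt (fun s : ℝ => (s - s^2/2) * c) ((1 - t) * c) t := by
      have h := (((hasDerivAt_id t).sub ((hasDerivAt_pow 2 t).div_const 2))).mul_const c
      exact h.congr_deriv (by push_cast; ring)
    have h := hsum.sub hpoly
    refine h.congr_deriv ?_
    symm
    have hterm : ∀ i, (1-t) * (ν i/(1+t*ν i))^2
        = (ν i + 1) * ν i/(1+t*ν i)^2 - ν i/(1+t*ν i) := by
      intro i
      have hne : 1 + t * ν i ≠ 0 := (hti i).ne'
      field_simp
      ring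
    rw [mul_sub, Finset.mul_sum]
    rw [Finset.sum_congr rfl fun i _ => hterm i]
  have hmono : MonotoneOn Φ (Set.Icc 0 1) := by
    apply monotoneOn_of_deriv_nonneg (convex_Icc 0 1)
    · intro t ht
      exact (hder t (hpos t ht)).continuousAt.continuousWithinAt
    · rw [interior_Icc]
      intro t ht
      exact (hder t (hpos t (Set.Ioo_subset_Icc_self ht))).differentiableAt.differentiableWithinAt
    · rw [interior_Icc]
      intro t ht
      rw [(hder t (hpos t (Set.Ioo_subset_Icc_self ht))).deriv]
      have h1 : (0:ℝ) ≤ 1 - t := by linarith [ht.2]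
      have h2 : 0 ≤ (∑ i, (ν i/(1+t*ν i))^2) - c := sub_nonneg.mpr (hpt t ht)
      exact mul_nonneg h1 h2
  have hkey : Φ 0 ≤ Φ 1 := hmono (Set.left_mem_Icc.mpr zero_le_one)
    (Set.right_mem_Icc.mpr zero_le_one) zero_le_one
  have hΦ0 : Φ 0 = ∑ i, (-(ν i + 1)) := by
    simp [hΦ_def]
  have hΦ1 : Φ 1 = (∑ i, (-1 - Real.log (1 + ν i))) - c/2 := by
    have : ∀ i, -(ν i + 1)/(1 + 1*ν i) - Real.log (1 + 1*ν i)
        = -1 - Real.log (1 + ν i) := by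
      intro i
      rw [one_mul]
      have hne : 1 + ν i ≠ 0 := (hν i).ne'
      field_simp
      ring
    have e1 : Φ 1 = (∑ i, (-(ν i + 1)/(1 + 1*ν i) - Real.log (1 + 1*ν i)))
        - ((1:ℝ) - 1^2/2) * c := rfl
    rw [e1, Finset.sum_congr rfl fun i _ => this i]
    ring
  rw [hΦ0, hΦ1] at hkey
  have hsplit : ∑ i, (ν i - Real.log (1 + ν i))
      = (∑ i, (-1 - Real.log (1 + ν i))) - (∑ i, (-(ν i + 1))) := by
    rw [← Finset.sum_sub_distrib]
    exact Finset.sum_congr rfl fun i _ => by ring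
  linarith

theorem stmt_11 {p : ℕ} (Θstar Θ Sighat : Matrix (Fin p) (Fin p) ℝ)
    (hstar : Θstar.PosDef) (hΘ : Θ.PosDef) (hSig : Sighat.PosSemidef)
    (R K : ℝ) (hR : 0 < R) (hfr : Real.sqrt (frobSq (Θ - Θstar)) ≤ R)
    (hK : opNorm Θstar ≤ K) :
    ((Sighat - Θstar⁻¹) * (Θ - Θstar)).trace +
        (1 / 2) * ((K + R) ^ 2)⁻¹ * frobSq (Θ - Θstar) ≤
      negLogLik Θ Sighat - negLogLik Θstar Sighat := by
  classical
  set A := Θstar with hA_def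
  set Δ := Θ - Θstar with hΔ_def
  have hΔh : Δ.IsHermitian := hΘ.1.sub hstar.1
  set F := frobSq Δ with hF_def
  have hF0 : 0 ≤ F := frobSq_nonneg Δ
  have hK0 : 0 ≤ K := le_trans (norm_nonneg _) hK
  have hKR : 0 < K + R := by linarith
  set c : ℝ := ((K + R)^2)⁻¹ with hc_def
  have hc0 : 0 ≤ c := by positivity
  -- square root of A
  obtain ⟨sA, hsAh, hsAsA⟩ := exists_sqrt_posDef hstar
  have hdetA : 0 < A.det := hstar.det_pos
  have hdet_sA : IsUnit sA.det := by
    have h1 : sA.det * sA.det = A.det := by rw [← Matrix.det_mul, hsAsA]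
    have hne : sA.det ≠ 0 := by
      intro h; rw [h, mul_zero] at h1; exact hdetA.ne' h1.symm
    exact hne.isUnit
  have hsAi : sA * sA⁻¹ = 1 := Matrix.mul_nonsing_inv _ hdet_sA
  have hsAi' : sA⁻¹ * sA = 1 := Matrix.nonsing_inv_mul _ hdet_sA
  set S := sA⁻¹ * Δ * sA⁻¹ with hS_def
  have hsAinvh : (sA⁻¹).IsHermitian := by
    unfold Matrix.IsHermitian
    rw [Matrix.conjTranspose_nonsing_inv, hsAh]
  have hSh : S.IsHermitian := by
    unfold Matrix.IsHermitian
    rw [hS_def, Matrix.conjTranspose_mul, Matrix.conjTranspose_mul, hsAinvh, hΔh, Matrix.mul_assoc]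
  set ν := hSh.eigenvalues with hν_def
  set U : Matrix (Fin p) (Fin p) ℝ := (Matrix.IsHermitian.eigenvectorUnitary hSh : Matrix (Fin p) (Fin p) ℝ) with hU_def
  have hU1 : U * star U = 1 := (Matrix.mem_unitaryGroup_iff).mp (Matrix.IsHermitian.eigenvectorUnitary hSh).2
  have hU2 : star U * U = 1 := (Matrix.mem_unitaryGroup_iff').mp (Matrix.IsHermitian.eigenvectorUnitary hSh).2
  have hSspec : S = U * diagonal ν * star U := by
    have := hSh.spectral_theorem
    simpa using this
  set W := sA * U with hW_def
  set V := star U * sA with hV_def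
  have hVW : Wᴴ = V := by
    rw [hW_def, hV_def, Matrix.conjTranspose_mul, hsAh]
    rfl
  have hWV : W * V = A := by
    rw [hW_def, hV_def, Matrix.mul_assoc, ← Matrix.mul_assoc U, hU1, Matrix.one_mul, hsAsA]
  have hdetWV : W.det * V.det = A.det := by rw [← Matrix.det_mul, hWV]
  have hWdet0 : W.det ≠ 0 := fun h => hdetA.ne' (by rw [← hdetWV, h, zero_mul])
  have hVdet0 : V.det ≠ 0 := fun h => hdetA.ne' (by rw [← hdetWV, h, mul_zero])
  have hWdet : IsUnit W.det := hWdet0.isUnit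
  have hVdet : IsUnit V.det := hVdet0.isUnit
  have hWi : W * W⁻¹ = 1 := Matrix.mul_nonsing_inv _ hWdet
  have hWi' : W⁻¹ * W = 1 := Matrix.nonsing_inv_mul _ hWdet
  have hVi : V * V⁻¹ = 1 := Matrix.mul_nonsing_inv _ hVdet
  have hVi' : V⁻¹ * V = 1 := Matrix.nonsing_inv_mul _ hVdet
  have hWcan : ∀ Z : Matrix (Fin p) (Fin p) ℝ, W⁻¹ * (W * Z) = Z := fun Z => by
    rw [← Matrix.mul_assoc, hWi', Matrix.one_mul]
  have hVcan : ∀ Z : Matrix (Fin p) (Fin p) ℝ, V * (V⁻¹ * Z) = Z := fun Z => by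
    rw [← Matrix.mul_assoc, hVi, Matrix.one_mul]
  have hsAcan : ∀ Z : Matrix (Fin p) (Fin p) ℝ, sA * (sA⁻¹ * Z) = Z := fun Z => by
    rw [← Matrix.mul_assoc, hsAi, Matrix.one_mul]
  have hΔeq : Δ = W * diagonal ν * V := by
    have h1 : sA * S * sA = Δ := by
      rw [hS_def]
      simp only [Matrix.mul_assoc, hsAcan, hsAi', Matrix.mul_one]
    rw [← h1, hSspec, hW_def, hV_def]
    simp only [Matrix.mul_assoc]
  have hMt : ∀ t : ℝ, A + t • Δ = W * diagonal (fun i => 1 + t * ν i) * V := by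
    intro t
    have hdg : diagonal (fun i => 1 + t * ν i) = 1 + t • diagonal ν := by
      ext i j
      by_cases h : i = j
      · subst h; simp [Matrix.diagonal_apply_eq, Matrix.one_apply_eq]
      · simp [Matrix.diagonal_apply_ne _ h, Matrix.one_apply_ne h]
    rw [hdg, Matrix.mul_add, Matrix.add_mul, Matrix.mul_one, hWV, Matrix.mul_smul,
      Matrix.smul_mul, ← hΔeq]
  have hBeq : Θ = W * diagonal (fun i => 1 + ν i) * V := by
    have h := hMt 1
    simp only [one_smul, one_mul] at h
    rw [← h, hA_def, hΔ_def]
    abel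
  -- positivity of 1 + ν i
  have hν_pos : ∀ i, 0 < 1 + ν i := by
    have hWinvdet : IsUnit W⁻¹.det := by
      rw [Matrix.det_nonsing_inv, Ring.inverse_eq_inv]
      exact (inv_ne_zero hWdet0).isUnit
    have hPD := posdef_conj hΘ hWinvdet
    have hid : W⁻¹ * Θ * (W⁻¹)ᴴ = diagonal (fun i => 1 + ν i) := by
      rw [Matrix.conjTranspose_nonsing_inv, hVW, hBeq, Matrix.mul_assoc W (diagonal _) V,
        hWcan, Matrix.mul_assoc, hVi, Matrix.mul_one]
    rw [hid] at hPD
    exact fun i => (Matrix.posDef_diagonal_iff.mp hPD) i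
  -- determinant identity
  have hdetB : Θ.det = A.det * ∏ i, (1 + ν i) := by
    rw [hBeq, Matrix.det_mul, Matrix.det_mul, Matrix.det_diagonal, ← hdetWV]
    ring
  have hprod_pos : 0 < ∏ i, (1 + ν i) := Finset.prod_pos (fun i _ => hν_pos i)
  have hlog : Real.log Θ.det = Real.log A.det + ∑ i, Real.log (1 + ν i) := by
    rw [hdetB, Real.log_mul hdetA.ne' hprod_pos.ne',
      Real.log_prod (fun i _ => (hν_pos i).ne')]
  -- trace identity
  have hAinv : A⁻¹ = V⁻¹ * W⁻¹ := by rw [← hWV, Matrix.mul_inv_rev]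
  have htrAinv : (A⁻¹ * Δ).trace = ∑ i, ν i := by
    have h2 : A⁻¹ * Δ = V⁻¹ * (diagonal ν * V) := by
      rw [hAinv, hΔeq]
      simp only [Matrix.mul_assoc, hWcan]
    rw [h2, Matrix.trace_mul_comm (V⁻¹) (diagonal ν * V), Matrix.mul_assoc, hVi,
      Matrix.mul_one, Matrix.trace_diagonal]
  -- pointwise trace inequality
  have hpt : ∀ t ∈ Set.Ioo (0:ℝ) 1, c * F ≤ ∑ i, (ν i / (1 + t * ν i))^2 := by
    intro t ht
    have h1t : 0 < 1 - t := by linarith [ht.2]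
    have hMtPD : (A + t • Δ).PosDef := by
      have h1 : A + t • Δ = (1 - t) • A + t • Θ := by
        rw [hΔ_def, hA_def]
        module
      rw [h1]
      exact (posdef_smul hstar h1t).add (posdef_smul hΘ ht.1)
    set Mt := A + t • Δ with hMt_def
    have hq : ∀ v : Fin p → ℝ, v ⬝ᵥ v = 1 → v ⬝ᵥ (Mt *ᵥ v) ≤ K + R := by
      intro v hv
      have h1 : v ⬝ᵥ (A *ᵥ v) ≤ K := le_trans (quad_le_opNorm A v hv) hK
      have h2 : v ⬝ᵥ (Δ *ᵥ v) ≤ R := le_trans (quad_le_frob Δ v hv) hfr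
      have h3 : v ⬝ᵥ (Mt *ᵥ v) = v ⬝ᵥ (A *ᵥ v) + t * (v ⬝ᵥ (Δ *ᵥ v)) := by
        rw [hMt_def, Matrix.add_mulVec, dotProduct_add, Matrix.smul_mulVec,
          dotProduct_smul, smul_eq_mul]
      rw [h3]
      nlinarith [ht.1, ht.2, mul_le_mul_of_nonneg_left h2 ht.1.le]
    have hevb := eigenvalue_le Mt hMtPD.1 (K + R) hq
    have hkt := key_trace Mt Δ hMtPD hΔh (K + R) hKR hevb
    rw [frob_eq_trace Δ hΔh] at hkt
    have hd_pos : ∀ i, (0:ℝ) < 1 + t * ν i := by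
      intro i
      nlinarith [hν_pos i, ht.1, ht.2, mul_pos ht.1 (hν_pos i)]
    have hDD1 : diagonal (fun i => 1 + t * ν i) * diagonal (fun i => (1 + t * ν i)⁻¹)
        = (1 : Matrix (Fin p) (Fin p) ℝ) := by
      rw [Matrix.diagonal_mul_diagonal]
      have : (fun i => (1 + t * ν i) * (1 + t * ν i)⁻¹) = fun _ => (1:ℝ) := by
        funext i; exact mul_inv_cancel₀ (hd_pos i).ne'
      rw [this, Matrix.diagonal_one]
    have hMtinv : Mt⁻¹ = V⁻¹ * diagonal (fun i => (1 + t * ν i)⁻¹) * W⁻¹ := by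
      apply Matrix.inv_eq_right_inv
      rw [hMt_def, hMt t]
      simp only [Matrix.mul_assoc, hVcan]
      rw [← Matrix.mul_assoc (diagonal fun i => 1 + t * ν i), hDD1, Matrix.one_mul, hWi]
    set g : Fin p → ℝ := fun i => (1 + t * ν i)⁻¹ * ν i with hg_def
    have hMtΔ : Mt⁻¹ * Δ = V⁻¹ * (diagonal g * V) := by
      rw [hMtinv, hΔeq]
      simp only [Matrix.mul_assoc, hWcan]
      rw [← Matrix.mul_assoc (diagonal fun i => (1 + t * ν i)⁻¹), Matrix.diagonal_mul_diagonal]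
    have hsq : Mt⁻¹ * Δ * (Mt⁻¹ * Δ) = V⁻¹ * (diagonal g * (diagonal g * V)) := by
      rw [hMtΔ]
      simp only [Matrix.mul_assoc, hVcan]
    rw [hsq] at hkt
    have htr : (V⁻¹ * (diagonal g * (diagonal g * V))).trace
        = ∑ i, (ν i / (1 + t * ν i))^2 := by
      rw [Matrix.trace_mul_comm (V⁻¹) (diagonal g * (diagonal g * V))]
      simp only [Matrix.mul_assoc]
      rw [hVi, Matrix.mul_one, Matrix.diagonal_mul_diagonal, Matrix.trace_diagonal]
      apply Finset.sum_congr rfl; intro i _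
      simp only [hg_def]
      rw [div_eq_mul_inv]
      ring
    rw [htr] at hkt
    exact hkt
  -- scalar part
  have hmain := scalar_ineq ν hν_pos (c * F) hpt
  have hsum_split : ∑ i, (ν i - Real.log (1 + ν i))
      = (∑ i, ν i) - ∑ i, Real.log (1 + ν i) := Finset.sum_sub_distrib _ _
  rw [hsum_split] at hmain
  -- final algebra
  have hTr : ((Sighat - A⁻¹) * Δ).trace
      = (Sighat * Θ).trace - (Sighat * A).trace - (A⁻¹ * Δ).trace := by
    rw [Matrix.sub_mul, Matrix.trace_sub, hΔ_def, Matrix.mul_sub, Matrix.trace_sub]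
  simp only [negLogLik]
  rw [hTr, hlog, htrAinv]
  linarith
end
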